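/- arXiv:math/0401386 — 4 statements merged into one kernel-verified Lean document; each statement's English description precedes it below -/
import Mathlib

section
/- Let U ⊂ ℝ^m and V ⊂ ℝ^p be convex precompact open sets, let k ≥ 1 be an integer and let λ ∈ [0,1). Given f ∈ C^{k+2}(V̄;ℝ) and u₀ ∈ C^{k,λ}(Ū;V), there exist δ > 0 and a constant C = C(U,V,k,λ,f,u₀,δ) such that for every u ∈ C^{k,λ}(Ū;V) with ‖u − u₀‖_{k,λ;Ū} ≤ δ one has ‖f∘u − f∘u₀‖_{k,λ;Ū} ≤ C ‖u − u₀‖_{k,λ;Ū}. -/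
open Set

noncomputable section

/-- Membership in the Hölder space `C^{k,λ}(closure W; F)`: all partial derivatives of
order `≤ k` extend continuously to `closure W`, and the order-`k` derivative is
`λ`-Hölder continuous on `closure W`. -/
def HolderSpaceMem {E F : Type*} [NormedAddCommGroup E] [NormedSpace ℝ E]
    [NormedAddCommGroup F] [NormedSpace ℝ F]
    (k : ℕ) (lam : ℝ) (W : Set E) (u : E → F) : Prop :=
  ContDiffOn ℝ k u (closure W) ∧
    ∃ C : ℝ, ∀ x ∈ closure W, ∀ y ∈ closure W,
      ‖iteratedFDerivWithin ℝ k u (closure W) x - iteratedFDerivWithin ℝ k u (closure W) y‖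
        ≤ C * ‖x - y‖ ^ lam

/-- The `C^{k,λ}` Hölder norm on `closure W`: the sum of the sup norms of the partial
derivatives of order `≤ k`, plus (when `λ ≠ 0`) the `λ`-Hölder seminorm of the order-`k`
derivative. -/
noncomputable def holderSpaceNorm {E F : Type*} [NormedAddCommGroup E] [NormedSpace ℝ E]
    [NormedAddCommGroup F] [NormedSpace ℝ F]
    (k : ℕ) (lam : ℝ) (W : Set E) (u : E → F) : ℝ :=
  (∑ i ∈ Finset.range (k + 1),
    ⨆ x : closure W, ‖iteratedFDerivWithin ℝ i u (closure W) (x : E)‖) +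
  if lam = 0 then 0 else
    ⨆ q : (closure W) ×ˢ (closure W),
      ‖iteratedFDerivWithin ℝ k u (closure W) (q : E × E).1 -
        iteratedFDerivWithin ℝ k u (closure W) (q : E × E).2‖ /
        ‖(q : E × E).1 - (q : E × E).2‖ ^ lam


section Helpers

lemma rpow_fac1 {lam r R : ℝ} (h0 : 0 ≤ lam) (h1 : lam ≤ 1) (hr : 0 ≤ r) (hR : r ≤ R) :
    r ≤ max 1 R * r ^ lam := by
  rcases eq_or_lt_of_le hr with h | h
  · have : (0:ℝ) ≤ max 1 R * r ^ lam := by positivity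
    linarith [this, h]
  · have key : r = r ^ (1 - lam) * r ^ lam := by
      rw [← Real.rpow_add h, sub_add_cancel, Real.rpow_one]
    calc r = r ^ (1 - lam) * r ^ lam := key
      _ ≤ max 1 R * r ^ lam := ?_
    have h2 : r ^ (1 - lam) ≤ max 1 R := by
      rcases le_total r 1 with hle | hle
      · exact (Real.rpow_le_one hr hle (by linarith)).trans (le_max_left _ _)
      · calc r ^ (1 - lam) ≤ r ^ (1:ℝ) :=
              Real.rpow_le_rpow_of_exponent_le hle (by linarith)
          _ = r := Real.rpow_one r
          _ ≤ max 1 R := hR.trans (le_max_right _ _)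
    exact mul_le_mul_of_nonneg_right h2 (Real.rpow_nonneg hr _)

lemma rpow_fac2 {lam r R : ℝ} (h0 : 0 ≤ lam) (h1 : lam ≤ 1) (hr : 0 ≤ r) (hR : r ≤ R) :
    r ^ lam ≤ max 1 R := by
  rcases le_total r 1 with hle | hle
  · exact (Real.rpow_le_one hr hle h0).trans (le_max_left _ _)
  · calc r ^ lam ≤ r ^ (1:ℝ) := Real.rpow_le_rpow_of_exponent_le hle h1
      _ = r := Real.rpow_one r
      _ ≤ max 1 R := hR.trans (le_max_right _ _)

end Helpers

section CN

variable {E : Type} [NormedAddCommGroup E] [NormedSpace ℝ E]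

/-- A uniform `C^{i,λ}`-type bound on a set. -/
def CN {F : Type} [NormedAddCommGroup F] [NormedSpace ℝ F]
    (i : ℕ) (lam : ℝ) (s : Set E) (h : E → F) (a : ℝ) : Prop :=
  (∀ j, j ≤ i → ∀ x ∈ s, ‖iteratedFDerivWithin ℝ j h s x‖ ≤ a) ∧
  (∀ x ∈ s, ∀ y ∈ s,
    ‖iteratedFDerivWithin ℝ i h s x - iteratedFDerivWithin ℝ i h s y‖ ≤ a * ‖x - y‖ ^ lam)

variable {F : Type} [NormedAddCommGroup F] [NormedSpace ℝ F] {s : Set E} {lam : ℝ}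

lemma cn_mono {i : ℕ} {a b : ℝ} {h : E → F} (hab : a ≤ b) (hc : CN i lam s h a) :
    CN i lam s h b := by
  refine ⟨fun j hj x hx => (hc.1 j hj x hx).trans hab, fun x hx y hy => ?_⟩
  exact (hc.2 x hx y hy).trans
    (mul_le_mul_of_nonneg_right hab (Real.rpow_nonneg (norm_nonneg _) _))

lemma cn_congr {i : ℕ} {a : ℝ} {h₁ h₂ : E → F} (heq : EqOn h₁ h₂ s)
    (hc : CN i lam s h₁ a) : CN i lam s h₂ a := by
  constructor
  · intro j hj x hx
    rw [← iteratedFDerivWithin_congr heq hx j]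
    exact hc.1 j hj x hx
  · intro x hx y hy
    rw [← iteratedFDerivWithin_congr heq hx i, ← iteratedFDerivWithin_congr heq hy i]
    exact hc.2 x hx y hy

lemma cn_nonneg {i : ℕ} {a : ℝ} {h : E → F} (hne : s.Nonempty) (hc : CN i lam s h a) :
    0 ≤ a := by
  obtain ⟨x, hx⟩ := hne
  exact (norm_nonneg _).trans (hc.1 0 (Nat.zero_le _) x hx)

lemma norm_iteratedFDerivWithin_zero_sub (h : E → F) (x y : E) :
    ‖iteratedFDerivWithin ℝ 0 h s x - iteratedFDerivWithin ℝ 0 h s y‖ = ‖h x - h y‖ := by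
  rw [iteratedFDerivWithin_zero_eq_comp, Function.comp_apply, Function.comp_apply,
    ← LinearIsometryEquiv.map_sub, LinearIsometryEquiv.norm_map]

lemma cn_succ_iff (hs : UniqueDiffOn ℝ s) {i : ℕ} {a : ℝ} {h : E → F} :
    CN (i+1) lam s h a ↔
      (∀ x ∈ s, ‖h x‖ ≤ a) ∧ CN i lam s (fderivWithin ℝ h s) a := by
  have hnorm : ∀ j : ℕ, ∀ x ∈ s,
      ‖iteratedFDerivWithin ℝ j (fderivWithin ℝ h s) s x‖
        = ‖iteratedFDerivWithin ℝ (j+1) h s x‖ := fun j x hx =>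
    norm_iteratedFDerivWithin_fderivWithin hs hx
  have hdiff : ∀ x ∈ s, ∀ y ∈ s,
      ‖iteratedFDerivWithin ℝ (i+1) h s x - iteratedFDerivWithin ℝ (i+1) h s y‖
        = ‖iteratedFDerivWithin ℝ i (fderivWithin ℝ h s) s x
            - iteratedFDerivWithin ℝ i (fderivWithin ℝ h s) s y‖ := by
    intro x hx y hy
    rw [iteratedFDerivWithin_succ_eq_comp_right hs hx,
      iteratedFDerivWithin_succ_eq_comp_right hs hy, Function.comp_apply, Function.comp_apply,
      ← LinearIsometryEquiv.map_sub, LinearIsometryEquiv.norm_map]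
  constructor
  · rintro ⟨hsup, hhol⟩
    refine ⟨fun x hx => ?_, ⟨fun j hj x hx => ?_, fun x hx y hy => ?_⟩⟩
    · have := hsup 0 (Nat.zero_le _) x hx
      rwa [norm_iteratedFDerivWithin_zero] at this
    · rw [hnorm j x hx]
      exact hsup (j+1) (Nat.succ_le_succ hj) x hx
    · rw [← hdiff x hx y hy]
      exact hhol x hx y hy
  · rintro ⟨h0, hsup, hhol⟩
    refine ⟨fun j hj x hx => ?_, fun x hx y hy => ?_⟩
    · cases j with
      | zero => rw [norm_iteratedFDerivWithin_zero]; exact h0 x hx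
      | succ j' =>
        rw [← hnorm j' x hx]
        exact hsup j' (Nat.succ_le_succ_iff.mp hj) x hx
    · rw [hdiff x hx y hy]
      exact hhol x hx y hy

lemma cn_add (hs : UniqueDiffOn ℝ s) {i : ℕ} {a b : ℝ} {h₁ h₂ : E → F}
    (hcd1 : ContDiffOn ℝ i h₁ s) (hcd2 : ContDiffOn ℝ i h₂ s)
    (hc1 : CN i lam s h₁ a) (hc2 : CN i lam s h₂ b) :
    CN i lam s (fun x => h₁ x + h₂ x) (a + b) := by
  have key : ∀ j : ℕ, j ≤ i → ∀ x ∈ s,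
      iteratedFDerivWithin ℝ j (fun x => h₁ x + h₂ x) s x
        = iteratedFDerivWithin ℝ j h₁ s x + iteratedFDerivWithin ℝ j h₂ s x := by
    intro j hj x hx
    have : (fun x => h₁ x + h₂ x) = h₁ + h₂ := rfl
    rw [this]
    exact iteratedFDerivWithin_add_apply ((hcd1.of_le (by exact_mod_cast hj)) x hx)
      ((hcd2.of_le (by exact_mod_cast hj)) x hx) hs hx
  constructor
  · intro j hj x hx
    rw [key j hj x hx]
    exact (norm_add_le _ _).trans (add_le_add (hc1.1 j hj x hx) (hc2.1 j hj x hx))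
  · intro x hx y hy
    rw [key i le_rfl x hx, key i le_rfl y hy]
    have : iteratedFDerivWithin ℝ i h₁ s x + iteratedFDerivWithin ℝ i h₂ s x
        - (iteratedFDerivWithin ℝ i h₁ s y + iteratedFDerivWithin ℝ i h₂ s y)
        = (iteratedFDerivWithin ℝ i h₁ s x - iteratedFDerivWithin ℝ i h₁ s y)
          + (iteratedFDerivWithin ℝ i h₂ s x - iteratedFDerivWithin ℝ i h₂ s y) := by abel
    rw [this, add_mul]
    exact (norm_add_le _ _).trans (add_le_add (hc1.2 x hx y hy) (hc2.2 x hx y hy))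

lemma cn_down (hconv : Convex ℝ s) (hs : UniqueDiffOn ℝ s) {R : ℝ}
    (hR : ∀ x ∈ s, ∀ y ∈ s, ‖x - y‖ ≤ R) (hl0 : 0 ≤ lam) (hl1 : lam ≤ 1)
    {i : ℕ} {a : ℝ} (ha : 0 ≤ a) {h : E → F} (hcd : ContDiffOn ℝ (i+1) h s)
    (hc : CN (i+1) lam s h a) : CN i lam s h (max 1 R * a) := by
  have hm1 : (1:ℝ) ≤ max 1 R := le_max_left _ _
  constructor
  · intro j hj x hx
    calc ‖iteratedFDerivWithin ℝ j h s x‖ ≤ a := hc.1 j (hj.trans (Nat.le_succ i)) x hx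
      _ = 1 * a := (one_mul a).symm
      _ ≤ max 1 R * a := mul_le_mul_of_nonneg_right hm1 ha
  · intro x hx y hy
    have hdiffble : DifferentiableOn ℝ (iteratedFDerivWithin ℝ i h s) s :=
      hcd.differentiableOn_iteratedFDerivWithin (by exact_mod_cast lt_add_one i) hs
    have hbd : ∀ z ∈ s, ‖fderivWithin ℝ (iteratedFDerivWithin ℝ i h s) s z‖ ≤ a := by
      intro z hz
      rw [norm_fderivWithin_iteratedFDerivWithin]
      exact hc.1 (i+1) le_rfl z hz
    have hmv := hconv.norm_image_sub_le_of_norm_fderivWithin_le hdiffble hbd hy hx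
    calc ‖iteratedFDerivWithin ℝ i h s x - iteratedFDerivWithin ℝ i h s y‖
        ≤ a * ‖x - y‖ := hmv
      _ ≤ a * (max 1 R * ‖x - y‖ ^ lam) := by
          apply mul_le_mul_of_nonneg_left _ ha
          exact rpow_fac1 hl0 hl1 (norm_nonneg _) (hR x hx y hy)
      _ = max 1 R * a * ‖x - y‖ ^ lam := by ring

lemma cn_down_iter (hconv : Convex ℝ s) (hs : UniqueDiffOn ℝ s) {R : ℝ}
    (hR : ∀ x ∈ s, ∀ y ∈ s, ‖x - y‖ ≤ R) (hl0 : 0 ≤ lam) (hl1 : lam ≤ 1)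
    (d : ℕ) : ∀ (i : ℕ) {a : ℝ}, 0 ≤ a → ∀ {h : E → F}, ContDiffOn ℝ (i+d) h s →
    CN (i+d) lam s h a → CN i lam s h ((max 1 R)^d * a) := by
  induction d with
  | zero => intro i a ha h hcd hc; simpa using hc
  | succ d IH =>
    intro i a ha h hcd hc
    have hcd1 : ContDiffOn ℝ (((i+d)+1 : ℕ)) h s := by exact_mod_cast hcd
    have hc1 : CN ((i+d)+1) lam s h a := hc
    have h1 : CN (i+d) lam s h (max 1 R * a) :=
      cn_down hconv hs hR hl0 hl1 ha hcd1 hc1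
    have h2 := IH i (by positivity) (hcd1.of_le (by exact_mod_cast Nat.le_succ (i+d))) h1
    apply cn_mono (le_of_eq (by ring)) h2

lemma cn_of_le (hconv : Convex ℝ s) (hs : UniqueDiffOn ℝ s) {R : ℝ}
    (hR : ∀ x ∈ s, ∀ y ∈ s, ‖x - y‖ ≤ R) (hl0 : 0 ≤ lam) (hl1 : lam ≤ 1)
    {i K : ℕ} (hik : i ≤ K) {a : ℝ} (ha : 0 ≤ a) {h : E → F}
    (hcd : ContDiffOn ℝ K h s) (hc : CN K lam s h a) :
    CN i lam s h ((max 1 R)^K * a) := by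
  obtain ⟨d, rfl⟩ := Nat.le.dest hik
  have := cn_down_iter hconv hs hR hl0 hl1 d i ha hcd hc
  apply cn_mono _ this
  have hm1 : (1:ℝ) ≤ max 1 R := le_max_left _ _
  have : (max 1 R)^d ≤ (max 1 R)^(i+d) := pow_le_pow_right₀ hm1 (Nat.le_add_left d i)
  exact mul_le_mul_of_nonneg_right this ha

end CN

section Bilin

variable {E : Type} [NormedAddCommGroup E] [NormedSpace ℝ E]

lemma cn_bilin_aux {s : Set E} (hconv : Convex ℝ s) (hs : UniqueDiffOn ℝ s) {R lam : ℝ}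
    (hR : ∀ x ∈ s, ∀ y ∈ s, ‖x - y‖ ≤ R) (hl0 : 0 ≤ lam) (hl1 : lam ≤ 1) :
    ∀ (i : ℕ) {F G H : Type} [NormedAddCommGroup F] [NormedSpace ℝ F]
      [NormedAddCommGroup G] [NormedSpace ℝ G] [NormedAddCommGroup H] [NormedSpace ℝ H]
      (B : F →L[ℝ] G →L[ℝ] H) (nb : ℝ), 0 ≤ nb → (∀ (f : F) (g : G), ‖B f g‖ ≤ nb * ‖f‖ * ‖g‖) →
      ∀ (h₁ : E → F) (h₂ : E → G) (a b : ℝ), 0 ≤ a → 0 ≤ b →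
      ContDiffOn ℝ i h₁ s → ContDiffOn ℝ i h₂ s → CN i lam s h₁ a → CN i lam s h₂ b →
      CN i lam s (fun x => B (h₁ x) (h₂ x)) ((2 * max 1 R + 2)^(i+1) * nb * a * b) := by
  have hm1 : (1:ℝ) ≤ max 1 R := le_max_left _ _
  intro i
  induction i with
  | zero =>
    intro F G H _ _ _ _ _ _ B nb hnb0 hnb h₁ h₂ a b ha hb hcd1 hcd2 hc1 hc2
    have hp : (2:ℝ) ≤ (2 * max 1 R + 2)^(0+1) := by
      rw [pow_one]; linarith
    have hsup : ∀ x ∈ s, ‖B (h₁ x) (h₂ x)‖ ≤ nb * a * b := by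
      intro x hx
      have e1 : ‖h₁ x‖ ≤ a := by
        have := hc1.1 0 le_rfl x hx; rwa [norm_iteratedFDerivWithin_zero] at this
      have e2 : ‖h₂ x‖ ≤ b := by
        have := hc2.1 0 le_rfl x hx; rwa [norm_iteratedFDerivWithin_zero] at this
      calc ‖B (h₁ x) (h₂ x)‖ ≤ nb * ‖h₁ x‖ * ‖h₂ x‖ := hnb _ _
        _ ≤ nb * a * b := by gcongr
    constructor
    · intro j hj x hx
      interval_cases j
      rw [norm_iteratedFDerivWithin_zero]
      calc ‖B (h₁ x) (h₂ x)‖ ≤ nb * a * b := hsup x hx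
        _ = 1 * (nb * a * b) := (one_mul _).symm
        _ ≤ (2 * max 1 R + 2)^(0+1) * (nb * a * b) := by
            apply mul_le_mul_of_nonneg_right (by linarith) (by positivity)
        _ = (2 * max 1 R + 2)^(0+1) * nb * a * b := by ring
    · intro x hx y hy
      rw [norm_iteratedFDerivWithin_zero_sub]
      have key : B (h₁ x) (h₂ x) - B (h₁ y) (h₂ y)
          = B (h₁ x - h₁ y) (h₂ x) + (B (h₁ y)) (h₂ x - h₂ y) := by
        simp only [map_sub, ContinuousLinearMap.sub_apply, ContinuousLinearMap.coe_sub']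
        abel
      have e1 : ‖h₁ x - h₁ y‖ ≤ a * ‖x - y‖ ^ lam := by
        have := hc1.2 x hx y hy; rwa [norm_iteratedFDerivWithin_zero_sub] at this
      have e2 : ‖h₂ x - h₂ y‖ ≤ b * ‖x - y‖ ^ lam := by
        have := hc2.2 x hx y hy; rwa [norm_iteratedFDerivWithin_zero_sub] at this
      have e1' : ‖h₁ y‖ ≤ a := by
        have := hc1.1 0 le_rfl y hy; rwa [norm_iteratedFDerivWithin_zero] at this
      have e2' : ‖h₂ x‖ ≤ b := by
        have := hc2.1 0 le_rfl x hx; rwa [norm_iteratedFDerivWithin_zero] at this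
      have hrp : (0:ℝ) ≤ ‖x - y‖ ^ lam := Real.rpow_nonneg (norm_nonneg _) _
      calc ‖B (h₁ x) (h₂ x) - B (h₁ y) (h₂ y)‖
          ≤ ‖B (h₁ x - h₁ y) (h₂ x)‖ + ‖(B (h₁ y)) (h₂ x - h₂ y)‖ := by
            rw [key]; exact norm_add_le _ _
        _ ≤ nb * (a * ‖x - y‖ ^ lam) * b + nb * a * (b * ‖x - y‖ ^ lam) := by
            apply add_le_add
            · calc ‖B (h₁ x - h₁ y) (h₂ x)‖ ≤ nb * ‖h₁ x - h₁ y‖ * ‖h₂ x‖ := hnb _ _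
                _ ≤ nb * (a * ‖x - y‖ ^ lam) * b := by gcongr
            · calc ‖(B (h₁ y)) (h₂ x - h₂ y)‖ ≤ nb * ‖h₁ y‖ * ‖h₂ x - h₂ y‖ := hnb _ _
                _ ≤ nb * a * (b * ‖x - y‖ ^ lam) := by gcongr
        _ = 2 * (nb * a * b) * ‖x - y‖ ^ lam := by ring
        _ ≤ (2 * max 1 R + 2)^(0+1) * (nb * a * b) * ‖x - y‖ ^ lam := by
            apply mul_le_mul_of_nonneg_right _ hrp
            apply mul_le_mul_of_nonneg_right hp (by positivity)
        _ = (2 * max 1 R + 2)^(0+1) * nb * a * b * ‖x - y‖ ^ lam := by ring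
  | succ i IH =>
    intro F G H _ _ _ _ _ _ B nb hnb0 hnb h₁ h₂ a b ha hb hcd1 hcd2 hc1 hc2
    have hone : (1 : WithTop ℕ∞) ≤ ((i+1 : ℕ) : WithTop ℕ∞) := by
      exact_mod_cast Nat.succ_le_succ (Nat.zero_le i)
    have hii : ((i:ℕ) : WithTop ℕ∞) + 1 ≤ ((i+1 : ℕ) : WithTop ℕ∞) := by exact_mod_cast le_rfl
    have hile : ((i:ℕ) : WithTop ℕ∞) ≤ ((i+1 : ℕ) : WithTop ℕ∞) := by exact_mod_cast Nat.le_succ i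
    have hnbR : ∀ (f : F) (dg : E →L[ℝ] G), ‖B.precompR E f dg‖ ≤ nb * ‖f‖ * ‖dg‖ := by
      intro f dg
      apply ContinuousLinearMap.opNorm_le_bound _ (by positivity)
      intro z
      have hz : B.precompR E f dg z = B f (dg z) := rfl
      rw [hz]
      calc ‖B f (dg z)‖ ≤ nb * ‖f‖ * ‖dg z‖ := hnb _ _
        _ ≤ nb * ‖f‖ * (‖dg‖ * ‖z‖) := by gcongr; exact dg.le_opNorm z
        _ = nb * ‖f‖ * ‖dg‖ * ‖z‖ := by ring
    have hnbL : ∀ (df : E →L[ℝ] F) (g : G), ‖B.precompL E df g‖ ≤ nb * ‖df‖ * ‖g‖ := by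
      intro df g
      apply ContinuousLinearMap.opNorm_le_bound _ (by positivity)
      intro z
      have hz : B.precompL E df g z = B (df z) g := rfl
      rw [hz]
      calc ‖B (df z) g‖ ≤ nb * ‖df z‖ * ‖g‖ := hnb _ _
        _ ≤ nb * (‖df‖ * ‖z‖) * ‖g‖ := by gcongr; exact df.le_opNorm z
        _ = nb * ‖df‖ * ‖g‖ * ‖z‖ := by ring
    rw [cn_succ_iff hs]
    constructor
    · intro x hx
      have e1 : ‖h₁ x‖ ≤ a := by
        have := hc1.1 0 (Nat.zero_le _) x hx; rwa [norm_iteratedFDerivWithin_zero] at this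
      have e2 : ‖h₂ x‖ ≤ b := by
        have := hc2.1 0 (Nat.zero_le _) x hx; rwa [norm_iteratedFDerivWithin_zero] at this
      calc ‖B (h₁ x) (h₂ x)‖ ≤ nb * ‖h₁ x‖ * ‖h₂ x‖ := hnb _ _
        _ ≤ nb * a * b := by gcongr
        _ = 1 * (nb * a * b) := (one_mul _).symm
        _ ≤ (2 * max 1 R + 2)^(i+1+1) * (nb * a * b) := by
            apply mul_le_mul_of_nonneg_right (one_le_pow₀ (by linarith)) (by positivity)
        _ = (2 * max 1 R + 2)^(i+1+1) * nb * a * b := by ring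
    · have heq : EqOn (fderivWithin ℝ (fun x => B (h₁ x) (h₂ x)) s)
          (fun y => B.precompR E (h₁ y) (fderivWithin ℝ h₂ s y)
            + B.precompL E (fderivWithin ℝ h₁ s y) (h₂ y)) s := by
        intro y hy
        exact B.fderivWithin_of_bilinear ((hcd1.differentiableOn (by simp)) y hy)
          ((hcd2.differentiableOn (by simp)) y hy) (hs y hy)
      apply cn_congr heq.symm
      have hd1 : ContDiffOn ℝ i (fderivWithin ℝ h₁ s) s := hcd1.fderivWithin hs hii
      have hd2 : ContDiffOn ℝ i (fderivWithin ℝ h₂ s) s := hcd2.fderivWithin hs hii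
      have A1 : CN i lam s h₁ (max 1 R * a) := cn_down hconv hs hR hl0 hl1 ha hcd1 hc1
      have A2 : CN i lam s (fderivWithin ℝ h₂ s) b := ((cn_succ_iff hs).1 hc2).2
      have B1 : CN i lam s (fderivWithin ℝ h₁ s) a := ((cn_succ_iff hs).1 hc1).2
      have B2 : CN i lam s h₂ (max 1 R * b) := cn_down hconv hs hR hl0 hl1 hb hcd2 hc2
      have T1 := IH (B.precompR E) nb hnb0 hnbR h₁ (fderivWithin ℝ h₂ s) (max 1 R * a) b
        (by positivity) hb (hcd1.of_le hile) hd2 A1 A2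
      have T2 := IH (B.precompL E) nb hnb0 hnbL (fderivWithin ℝ h₁ s) h₂ a (max 1 R * b)
        ha (by positivity) hd1 (hcd2.of_le hile) B1 B2
      have hct1 : ContDiffOn ℝ i (fun y => B.precompR E (h₁ y) (fderivWithin ℝ h₂ s y)) s :=
        (B.precompR E).isBoundedBilinearMap.contDiff.comp₂_contDiffOn (hcd1.of_le hile) hd2
      have hct2 : ContDiffOn ℝ i (fun y => B.precompL E (fderivWithin ℝ h₁ s y) (h₂ y)) s :=
        (B.precompL E).isBoundedBilinearMap.contDiff.comp₂_contDiffOn hd1 (hcd2.of_le hile)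
      have hsum := cn_add hs hct1 hct2 T1 T2
      apply cn_mono _ hsum
      calc (2 * max 1 R + 2)^(i+1) * nb * (max 1 R * a) * b
            + (2 * max 1 R + 2)^(i+1) * nb * a * (max 1 R * b)
          = (2 * max 1 R) * ((2 * max 1 R + 2)^(i+1) * (nb * a * b)) := by ring
        _ ≤ (2 * max 1 R + 2) * ((2 * max 1 R + 2)^(i+1) * (nb * a * b)) := by
            apply mul_le_mul_of_nonneg_right (by linarith) (by positivity)
        _ = (2 * max 1 R + 2)^(i+1+1) * nb * a * b := by ring

end Bilin

section FourPoint

variable {P W : Type} [NormedAddCommGroup P] [NormedSpace ℝ P]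
  [NormedAddCommGroup W] [NormedSpace ℝ W]

lemma four_point {t : Set P} (hconv : Convex ℝ t) {g : P → W}
    (hg : DifferentiableOn ℝ g t) {c₁ c₂ : ℝ} (hc₂0 : 0 ≤ c₂)
    (hb1 : ∀ z ∈ t, ‖fderivWithin ℝ g t z‖ ≤ c₁)
    (hb2 : ∀ z ∈ t, ∀ w ∈ t, ‖fderivWithin ℝ g t z - fderivWithin ℝ g t w‖ ≤ c₂ * ‖z - w‖)
    {a b c d : P} (hat : a ∈ t) (hbt : b ∈ t) (hct : c ∈ t) (hdt : d ∈ t) :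
    ‖g a - g b - (g c - g d)‖
      ≤ c₁ * ‖a - b - (c - d)‖ + c₂ * (‖c - d‖ + ‖a - b - (c - d)‖) * ‖b - d‖ := by
  set p : ℝ → P := fun τ => c + τ • (a - c) with hp
  set q : ℝ → P := fun τ => d + τ • (b - d) with hq
  have hpt : ∀ τ ∈ Icc (0:ℝ) 1, p τ ∈ t := fun τ hτ => hconv.add_smul_sub_mem hct hat hτ
  have hqt : ∀ τ ∈ Icc (0:ℝ) 1, q τ ∈ t := fun τ hτ => hconv.add_smul_sub_mem hdt hbt hτ
  set φ : ℝ → W := fun τ => g (p τ) - g (q τ) with hφ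
  set φ' : ℝ → W :=
    fun τ => fderivWithin ℝ g t (p τ) (a - c) - fderivWithin ℝ g t (q τ) (b - d) with hφ'
  have hder : ∀ τ ∈ Icc (0:ℝ) 1, HasDerivWithinAt φ (φ' τ) (Icc 0 1) τ := by
    intro τ hτ
    have hpd : HasDerivWithinAt p (a - c) (Icc 0 1) τ := by
      have h1 : HasDerivAt (fun τ : ℝ => τ • (a - c)) ((1:ℝ) • (a - c)) τ :=
        (hasDerivAt_id τ).smul_const (a - c)
      have h2 : HasDerivAt p ((1:ℝ) • (a - c)) τ := h1.const_add c
      simpa using h2.hasDerivWithinAt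
    have hqd : HasDerivWithinAt q (b - d) (Icc 0 1) τ := by
      have h1 : HasDerivAt (fun τ : ℝ => τ • (b - d)) ((1:ℝ) • (b - d)) τ :=
        (hasDerivAt_id τ).smul_const (b - d)
      have h2 : HasDerivAt q ((1:ℝ) • (b - d)) τ := h1.const_add d
      simpa using h2.hasDerivWithinAt
    exact ((((hg _ (hpt τ hτ)).hasFDerivWithinAt.comp_hasDerivWithinAt τ hpd hpt)).sub
      (((hg _ (hqt τ hτ)).hasFDerivWithinAt.comp_hasDerivWithinAt τ hqd hqt)))
  have habel : a - c - (b - d) = a - b - (c - d) := by abel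
  have hbound : ∀ τ ∈ Icc (0:ℝ) 1,
      ‖φ' τ‖ ≤ c₁ * ‖a - b - (c - d)‖ + c₂ * (‖c - d‖ + ‖a - b - (c - d)‖) * ‖b - d‖ := by
    intro τ hτ
    have key : φ' τ = fderivWithin ℝ g t (p τ) (a - c - (b - d))
        + (fderivWithin ℝ g t (p τ) - fderivWithin ℝ g t (q τ)) (b - d) := by
      rw [hφ']
      simp only [map_sub, ContinuousLinearMap.sub_apply]
      abel
    have hpq : ‖p τ - q τ‖ ≤ ‖c - d‖ + ‖a - b - (c - d)‖ := by
      have heq : p τ - q τ = (c - d) + τ • (a - c - (b - d)) := by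
        rw [hp, hq]; simp only [smul_sub]; abel
      rw [heq]
      calc ‖(c - d) + τ • (a - c - (b - d))‖ ≤ ‖c - d‖ + ‖τ • (a - c - (b - d))‖ :=
            norm_add_le _ _
        _ ≤ ‖c - d‖ + ‖a - b - (c - d)‖ := by
            apply add_le_add le_rfl
            rw [norm_smul, habel]
            have : |τ| ≤ 1 := by
              rw [abs_le]; exact ⟨by linarith [hτ.1], hτ.2⟩
            calc ‖τ‖ * ‖a - b - (c - d)‖ ≤ 1 * ‖a - b - (c - d)‖ := by
                  apply mul_le_mul_of_nonneg_right _ (norm_nonneg _)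
                  rwa [Real.norm_eq_abs]
              _ = ‖a - b - (c - d)‖ := one_mul _
    rw [key]
    calc ‖fderivWithin ℝ g t (p τ) (a - c - (b - d))
          + (fderivWithin ℝ g t (p τ) - fderivWithin ℝ g t (q τ)) (b - d)‖
        ≤ ‖fderivWithin ℝ g t (p τ) (a - c - (b - d))‖
          + ‖(fderivWithin ℝ g t (p τ) - fderivWithin ℝ g t (q τ)) (b - d)‖ := norm_add_le _ _
      _ ≤ c₁ * ‖a - b - (c - d)‖ + c₂ * (‖c - d‖ + ‖a - b - (c - d)‖) * ‖b - d‖ := by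
          apply add_le_add
          · calc ‖fderivWithin ℝ g t (p τ) (a - c - (b - d))‖
                ≤ ‖fderivWithin ℝ g t (p τ)‖ * ‖a - c - (b - d)‖ :=
                  ContinuousLinearMap.le_opNorm _ _
              _ ≤ c₁ * ‖a - b - (c - d)‖ := by
                  rw [habel]
                  exact mul_le_mul_of_nonneg_right (hb1 _ (hpt τ hτ)) (norm_nonneg _)
          · calc ‖(fderivWithin ℝ g t (p τ) - fderivWithin ℝ g t (q τ)) (b - d)‖
                ≤ ‖fderivWithin ℝ g t (p τ) - fderivWithin ℝ g t (q τ)‖ * ‖b - d‖ :=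
                  ContinuousLinearMap.le_opNorm _ _
              _ ≤ (c₂ * ‖p τ - q τ‖) * ‖b - d‖ :=
                  mul_le_mul_of_nonneg_right (hb2 _ (hpt τ hτ) _ (hqt τ hτ)) (norm_nonneg _)
              _ ≤ c₂ * (‖c - d‖ + ‖a - b - (c - d)‖) * ‖b - d‖ := by
                  apply mul_le_mul_of_nonneg_right _ (norm_nonneg _)
                  exact mul_le_mul_of_nonneg_left hpq hc₂0
  have hmv := Convex.norm_image_sub_le_of_norm_hasDerivWithin_le hder hbound (convex_Icc 0 1)
    (left_mem_Icc.2 zero_le_one) (right_mem_Icc.2 zero_le_one)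
  have hφ1 : φ 1 = g a - g b := by rw [hφ]; simp [hp, hq]
  have hφ0 : φ 0 = g c - g d := by rw [hφ]; simp [hp, hq]
  calc ‖g a - g b - (g c - g d)‖ = ‖φ 1 - φ 0‖ := by rw [hφ1, hφ0]
    _ ≤ (c₁ * ‖a - b - (c - d)‖ + c₂ * (‖c - d‖ + ‖a - b - (c - d)‖) * ‖b - d‖) * ‖(1:ℝ) - 0‖ :=
        hmv
    _ = c₁ * ‖a - b - (c - d)‖ + c₂ * (‖c - d‖ + ‖a - b - (c - d)‖) * ‖b - d‖ := by
        simp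

end FourPoint

section Comp

variable {E P : Type} [NormedAddCommGroup E] [NormedSpace ℝ E]
  [NormedAddCommGroup P] [NormedSpace ℝ P]

lemma norm_fderivWithin_eq_one {s : Set E} {F : Type} [NormedAddCommGroup F] [NormedSpace ℝ F]
    (hs : UniqueDiffOn ℝ s) {x : E} (hx : x ∈ s) (h : E → F) :
    ‖fderivWithin ℝ h s x‖ = ‖iteratedFDerivWithin ℝ 1 h s x‖ := by
  have h1 := norm_iteratedFDerivWithin_fderivWithin (𝕜 := ℝ) (f := h) (s := s) (n := 0) hs hx
  rwa [norm_iteratedFDerivWithin_zero] at h1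

lemma compL_nb : ∀ (W : Type) [NormedAddCommGroup W] [NormedSpace ℝ W]
    (f : P →L[ℝ] W) (g : E →L[ℝ] P),
    ‖(ContinuousLinearMap.compL ℝ E P W) f g‖ ≤ 1 * ‖f‖ * ‖g‖ := by
  intro W _ _ f g
  rw [ContinuousLinearMap.compL_apply, one_mul]
  exact ContinuousLinearMap.opNorm_comp_le f g

lemma cn_comp_aux {s : Set E} {t : Set P}
    (hconvs : Convex ℝ s) (hs : UniqueDiffOn ℝ s) (hconvt : Convex ℝ t) (ht : UniqueDiffOn ℝ t)
    {R lam : ℝ} (hR : ∀ x ∈ s, ∀ y ∈ s, ‖x - y‖ ≤ R) (hl0 : 0 ≤ lam) (hl1 : lam ≤ 1)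
    {K : ℕ} (hK : 1 ≤ K) {w : E → P} (hw : ContDiffOn ℝ K w s) (hwt : MapsTo w s t)
    {M : ℝ} (hM : 0 ≤ M) (hcw : CN K lam s w M) :
    ∀ i, i ≤ K → ∃ C : ℝ, 0 ≤ C ∧
      ∀ (W : Type) [NormedAddCommGroup W] [NormedSpace ℝ W] (g : P → W) (c : ℝ), 0 ≤ c →
        ContDiffOn ℝ (i+1) g t →
        (∀ j, j ≤ i+1 → ∀ z ∈ t, ‖iteratedFDerivWithin ℝ j g t z‖ ≤ c) →
        CN i lam s (fun x => g (w x)) (C * c) := by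
  have hm1 : (1:ℝ) ≤ max 1 R := le_max_left _ _
  have hm0 : (0:ℝ) ≤ max 1 R := by linarith
  intro i
  induction i with
  | zero =>
    intro _
    refine ⟨1 + M * max 1 R, by positivity, ?_⟩
    intro W _ _ g c hc hg hgb
    have hgd : DifferentiableOn ℝ g t := hg.differentiableOn (by simp)
    have hg1 : ∀ z ∈ t, ‖fderivWithin ℝ g t z‖ ≤ c := by
      intro z hz
      rw [norm_fderivWithin_eq_one ht hz]
      exact hgb 1 le_rfl z hz
    have hwl : ∀ x ∈ s, ∀ y ∈ s, ‖w x - w y‖ ≤ M * ‖x - y‖ := by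
      intro x hx y hy
      exact hconvs.norm_image_sub_le_of_norm_fderivWithin_le
        (hw.differentiableOn (by exact_mod_cast (show K ≠ 0 by omega)))
        (fun z hz => by rw [norm_fderivWithin_eq_one hs hz]; exact hcw.1 1 hK z hz) hy hx
    constructor
    · intro j hj x hx
      interval_cases j
      rw [norm_iteratedFDerivWithin_zero]
      have h0 := hgb 0 (Nat.zero_le _) _ (hwt hx)
      rw [norm_iteratedFDerivWithin_zero] at h0
      calc ‖g (w x)‖ ≤ c := h0
        _ = 1 * c := (one_mul c).symm
        _ ≤ (1 + M * max 1 R) * c := by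
            apply mul_le_mul_of_nonneg_right _ hc
            nlinarith
    · intro x hx y hy
      rw [norm_iteratedFDerivWithin_zero_sub]
      calc ‖g (w x) - g (w y)‖ ≤ c * ‖w x - w y‖ :=
            hconvt.norm_image_sub_le_of_norm_fderivWithin_le hgd hg1 (hwt hy) (hwt hx)
        _ ≤ c * (M * ‖x - y‖) := mul_le_mul_of_nonneg_left (hwl x hx y hy) hc
        _ ≤ c * (M * (max 1 R * ‖x - y‖ ^ lam)) := by
            apply mul_le_mul_of_nonneg_left _ hc
            apply mul_le_mul_of_nonneg_left _ hM
            exact rpow_fac1 hl0 hl1 (norm_nonneg _) (hR x hx y hy)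
        _ = M * max 1 R * c * ‖x - y‖ ^ lam := by ring
        _ ≤ (1 + M * max 1 R) * c * ‖x - y‖ ^ lam := by
            apply mul_le_mul_of_nonneg_right _ (Real.rpow_nonneg (norm_nonneg _) _)
            apply mul_le_mul_of_nonneg_right _ hc
            nlinarith
  | succ i IH =>
    intro hiK
    obtain ⟨K', rfl⟩ : ∃ K', K = K' + 1 := ⟨K - 1, (Nat.succ_pred_eq_of_pos hK).symm⟩
    obtain ⟨C, hC0, hCp⟩ := IH (le_trans (Nat.le_succ i) hiK)
    have hiK' : i ≤ K' := Nat.succ_le_succ_iff.mp hiK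
    refine ⟨1 + (2 * max 1 R + 2)^(i+1) * C * ((max 1 R)^(K'+1) * M), by positivity, ?_⟩
    intro W _ _ g c hc hg hgb
    -- derivative of w
    have hcdDw : ContDiffOn ℝ K' (fderivWithin ℝ w s) s :=
      hw.fderivWithin hs (by push_cast; exact le_rfl)
    have hDwK : CN K' lam s (fderivWithin ℝ w s) M := ((cn_succ_iff hs).1 hcw).2
    have hDw : CN i lam s (fderivWithin ℝ w s) ((max 1 R)^(K'+1) * M) := by
      have h2 := cn_of_le hconvs hs hR hl0 hl1 hiK' hM hcdDw hDwK
      exact cn_mono (mul_le_mul_of_nonneg_right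
        (pow_le_pow_right₀ hm1 (Nat.le_succ K')) hM) h2
    -- derivative of g
    have hg' : ContDiffOn ℝ (i+1) (fderivWithin ℝ g t) t :=
      hg.fderivWithin ht (by push_cast; exact le_rfl)
    have hg'b : ∀ j, j ≤ i+1 → ∀ z ∈ t,
        ‖iteratedFDerivWithin ℝ j (fderivWithin ℝ g t) t z‖ ≤ c := by
      intro j hj z hz
      rw [norm_iteratedFDerivWithin_fderivWithin ht hz]
      exact hgb (j+1) (Nat.succ_le_succ hj) z hz
    have hcomp : CN i lam s (fun x => fderivWithin ℝ g t (w x)) (C * c) :=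
      hCp (P →L[ℝ] W) (fderivWithin ℝ g t) c hc hg' hg'b
    rw [cn_succ_iff hs]
    constructor
    · intro x hx
      have h0 := hgb 0 (Nat.zero_le _) _ (hwt hx)
      rw [norm_iteratedFDerivWithin_zero] at h0
      calc ‖g (w x)‖ ≤ c := h0
        _ = 1 * c := (one_mul c).symm
        _ ≤ (1 + (2 * max 1 R + 2)^(i+1) * C * ((max 1 R)^(K'+1) * M)) * c := by
            apply mul_le_mul_of_nonneg_right _ hc
            have : (0:ℝ) ≤ (2 * max 1 R + 2)^(i+1) * C * ((max 1 R)^(K'+1) * M) := by positivity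
            linarith
    · have heq : EqOn (fderivWithin ℝ (fun x => g (w x)) s)
          (fun y => (ContinuousLinearMap.compL ℝ E P W)
            (fderivWithin ℝ g t (w y)) (fderivWithin ℝ w s y)) s := by
        intro y hy
        have hgd2 : DifferentiableWithinAt ℝ g t (w y) :=
          (hg.differentiableOn (by simp)) _ (hwt hy)
        have hwd : DifferentiableWithinAt ℝ w s y :=
          (hw.differentiableOn (by simp)) _ hy
        exact fderivWithin_comp (𝕜 := ℝ) (f := w) (g := g) (t := t) y hgd2 hwd hwt (hs y hy)
      apply cn_congr heq.symm
      have hcd1 : ContDiffOn ℝ i (fun y => fderivWithin ℝ g t (w y)) s :=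
        (hg'.of_le (by exact_mod_cast Nat.le_succ i)).comp
          (hw.of_le (by exact_mod_cast (Nat.le_succ i).trans hiK)) hwt
      have hcd2 : ContDiffOn ℝ i (fderivWithin ℝ w s) s :=
        hcdDw.of_le (by exact_mod_cast hiK')
      have hbil := cn_bilin_aux hconvs hs hR hl0 hl1 i (ContinuousLinearMap.compL ℝ E P W)
        1 zero_le_one (compL_nb W)
        (fun y => fderivWithin ℝ g t (w y)) (fderivWithin ℝ w s)
        (C * c) ((max 1 R)^(K'+1) * M) (by positivity) (by positivity)
        hcd1 hcd2 hcomp hDw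
      apply cn_mono _ hbil
      calc (2 * max 1 R + 2)^(i+1) * 1 * (C * c) * ((max 1 R)^(K'+1) * M)
          = ((2 * max 1 R + 2)^(i+1) * C * ((max 1 R)^(K'+1) * M)) * c := by ring
        _ ≤ (1 + (2 * max 1 R + 2)^(i+1) * C * ((max 1 R)^(K'+1) * M)) * c := by
            apply mul_le_mul_of_nonneg_right _ hc
            have : (0:ℝ) ≤ 1 := zero_le_one
            linarith

end Comp

section Main

variable {E P : Type} [NormedAddCommGroup E] [NormedSpace ℝ E]
  [NormedAddCommGroup P] [NormedSpace ℝ P]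

lemma cn_main {s : Set E} {t : Set P}
    (hconvs : Convex ℝ s) (hs : UniqueDiffOn ℝ s) (hconvt : Convex ℝ t) (ht : UniqueDiffOn ℝ t)
    {R lam : ℝ} (hR : ∀ x ∈ s, ∀ y ∈ s, ‖x - y‖ ≤ R) (hl0 : 0 ≤ lam) (hl1 : lam ≤ 1)
    {K : ℕ} (hK : 1 ≤ K) {u₀ : E → P} (hu₀ : ContDiffOn ℝ K u₀ s) (hu₀t : MapsTo u₀ s t)
    {M : ℝ} (hM : 0 ≤ M) (hcu₀ : CN K lam s u₀ M) :
    ∀ i, i ≤ K → ∃ C : ℝ, 0 ≤ C ∧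
      ∀ (W : Type) [NormedAddCommGroup W] [NormedSpace ℝ W] (g : P → W) (c : ℝ), 0 ≤ c →
        ContDiffOn ℝ (i+2) g t →
        (∀ j, j ≤ i+2 → ∀ z ∈ t, ‖iteratedFDerivWithin ℝ j g t z‖ ≤ c) →
        ∀ (u : E → P), ContDiffOn ℝ K u s → MapsTo u s t → CN K lam s u M →
        ∀ (n : ℝ), 0 ≤ n → CN K lam s (fun x => u x - u₀ x) n →
        CN i lam s (fun x => g (u x) - g (u₀ x)) (C * c * n) := by
  have hm1 : (1:ℝ) ≤ max 1 R := le_max_left _ _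
  have hm0 : (0:ℝ) ≤ max 1 R := by linarith
  -- Lipschitz bound for u₀
  have hu₀L : ∀ x ∈ s, ∀ y ∈ s, ‖u₀ x - u₀ y‖ ≤ M * ‖x - y‖ := by
    intro x hx y hy
    exact hconvs.norm_image_sub_le_of_norm_fderivWithin_le
      (hu₀.differentiableOn (by exact_mod_cast (show K ≠ 0 by omega)))
      (fun z hz => by rw [norm_fderivWithin_eq_one hs hz]; exact hcu₀.1 1 hK z hz) hy hx
  intro i
  induction i with
  | zero =>
    intro _
    refine ⟨1 + ((max 1 R)^K + M * max 1 R * (1 + (max 1 R)^K * max 1 R)),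
      by positivity, ?_⟩
    intro W _ _ g c hc hg hgb u hu hut hcu n hn hv
    have hvsup : ∀ x ∈ s, ‖u x - u₀ x‖ ≤ n := by
      intro x hx
      have h0 := hv.1 0 (Nat.zero_le _) x hx
      rwa [norm_iteratedFDerivWithin_zero] at h0
    have hgd : DifferentiableOn ℝ g t :=
      hg.differentiableOn (by simp)
    have hg1 : ∀ z ∈ t, ‖fderivWithin ℝ g t z‖ ≤ c := by
      intro z hz
      rw [norm_fderivWithin_eq_one ht hz]
      exact hgb 1 (by norm_num) z hz
    have hsup : ∀ x ∈ s, ‖g (u x) - g (u₀ x)‖ ≤ c * n := by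
      intro x hx
      calc ‖g (u x) - g (u₀ x)‖ ≤ c * ‖u x - u₀ x‖ :=
            hconvt.norm_image_sub_le_of_norm_fderivWithin_le hgd hg1 (hu₀t hx) (hut hx)
        _ ≤ c * n := mul_le_mul_of_nonneg_left (hvsup x hx) hc
    -- Lipschitz bound for the derivative of g
    have hg'cd : ContDiffOn ℝ 1 (fderivWithin ℝ g t) t :=
      hg.fderivWithin ht (by exact_mod_cast Nat.le_refl 2)
    have hgL : ∀ z ∈ t, ∀ z' ∈ t,
        ‖fderivWithin ℝ g t z - fderivWithin ℝ g t z'‖ ≤ c * ‖z - z'‖ := by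
      intro z hz z' hz'
      apply hconvt.norm_image_sub_le_of_norm_fderivWithin_le
        (hg'cd.differentiableOn (by simp))
        (fun y hy => ?_) hz' hz
      rw [norm_fderivWithin_eq_one ht hy, norm_iteratedFDerivWithin_fderivWithin ht hy]
      exact hgb 2 (by norm_num) y hy
    -- CN 0 bound for v
    have hvcd : ContDiffOn ℝ K (fun x => u x - u₀ x) s := hu.sub hu₀
    have hv0 : CN 0 lam s (fun x => u x - u₀ x) ((max 1 R)^K * n) :=
      cn_of_le hconvs hs hR hl0 hl1 (Nat.zero_le K) hn hvcd hv
    have hvH : ∀ x ∈ s, ∀ y ∈ s,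
        ‖(u x - u₀ x) - (u y - u₀ y)‖ ≤ (max 1 R)^K * n * ‖x - y‖ ^ lam := by
      intro x hx y hy
      have h0 := hv0.2 x hx y hy
      rwa [norm_iteratedFDerivWithin_zero_sub] at h0
    constructor
    · intro j hj x hx
      interval_cases j
      rw [norm_iteratedFDerivWithin_zero]
      calc ‖g (u x) - g (u₀ x)‖ ≤ c * n := hsup x hx
        _ = 1 * (c * n) := (one_mul _).symm
        _ ≤ (1 + ((max 1 R)^K + M * max 1 R * (1 + (max 1 R)^K * max 1 R))) * (c * n) := by
            apply mul_le_mul_of_nonneg_right _ (by positivity)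
            have : (0:ℝ) ≤ (max 1 R)^K + M * max 1 R * (1 + (max 1 R)^K * max 1 R) := by
              positivity
            linarith
        _ = (1 + ((max 1 R)^K + M * max 1 R * (1 + (max 1 R)^K * max 1 R))) * c * n := by
            ring
    · intro x hx y hy
      rw [norm_iteratedFDerivWithin_zero_sub]
      have hfp := four_point hconvt hgd hc hg1 hgL (hut hx) (hu₀t hx) (hut hy) (hu₀t hy)
      have hA0 : (0:ℝ) ≤ ‖x - y‖ ^ lam := Real.rpow_nonneg (norm_nonneg _) _
      have hAm : ‖x - y‖ ^ lam ≤ max 1 R :=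
        rpow_fac2 hl0 hl1 (norm_nonneg _) (hR x hx y hy)
      have hxy : ‖x - y‖ ≤ max 1 R * ‖x - y‖ ^ lam :=
        rpow_fac1 hl0 hl1 (norm_nonneg _) (hR x hx y hy)
      have e1 : ‖u x - u₀ x - (u y - u₀ y)‖ ≤ (max 1 R)^K * n * ‖x - y‖ ^ lam := hvH x hx y hy
      have e2 : ‖u y - u₀ y‖ ≤ n := hvsup y hy
      have e3 : ‖u₀ x - u₀ y‖ ≤ M * (max 1 R * ‖x - y‖ ^ lam) := by
        calc ‖u₀ x - u₀ y‖ ≤ M * ‖x - y‖ := hu₀L x hx y hy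
          _ ≤ M * (max 1 R * ‖x - y‖ ^ lam) := mul_le_mul_of_nonneg_left hxy hM
      calc ‖g (u x) - g (u₀ x) - (g (u y) - g (u₀ y))‖
          ≤ c * ‖u x - u₀ x - (u y - u₀ y)‖
            + c * (‖u y - u₀ y‖ + ‖u x - u₀ x - (u y - u₀ y)‖) * ‖u₀ x - u₀ y‖ := hfp
        _ ≤ c * ((max 1 R)^K * n * ‖x - y‖ ^ lam)
            + c * (n + (max 1 R)^K * n * ‖x - y‖ ^ lam) * (M * (max 1 R * ‖x - y‖ ^ lam)) := by
            gcongr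
        _ = ((max 1 R)^K + M * max 1 R) * (c * n) * ‖x - y‖ ^ lam
            + ((max 1 R)^K * M * max 1 R) * (c * n) * (‖x - y‖ ^ lam * ‖x - y‖ ^ lam) := by
            ring
        _ ≤ ((max 1 R)^K + M * max 1 R) * (c * n) * ‖x - y‖ ^ lam
            + ((max 1 R)^K * M * max 1 R) * (c * n) * (max 1 R * ‖x - y‖ ^ lam) := by
            gcongr
        _ = ((max 1 R)^K + M * max 1 R * (1 + (max 1 R)^K * max 1 R)) * (c * n)
              * ‖x - y‖ ^ lam := by ring
        _ ≤ (1 + ((max 1 R)^K + M * max 1 R * (1 + (max 1 R)^K * max 1 R))) * c * n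
              * ‖x - y‖ ^ lam := by
            apply mul_le_mul_of_nonneg_right _ hA0
            have h9 : (0:ℝ) ≤ c * n := by positivity
            nlinarith
  | succ i IH =>
    intro hiK
    obtain ⟨K', rfl⟩ : ∃ K', K = K' + 1 := ⟨K - 1, (Nat.succ_pred_eq_of_pos hK).symm⟩
    have hiK' : i ≤ K' := Nat.succ_le_succ_iff.mp hiK
    obtain ⟨Cm, hCm0, hCmp⟩ := IH (le_trans (Nat.le_succ i) hiK)
    obtain ⟨Cp, hCp0, hCpp⟩ := cn_comp_aux hconvs hs hconvt ht hR hl0 hl1 hK hu₀ hu₀t hM hcu₀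
      i (le_trans (Nat.le_succ i) hiK)
    refine ⟨1 + ((2 * max 1 R + 2)^(i+1) * Cm * ((max 1 R)^(K'+1) * M)
      + (2 * max 1 R + 2)^(i+1) * Cp * (max 1 R)^(K'+1)), by positivity, ?_⟩
    intro W _ _ g c hc hg hgb u hu hut hcu n hn hv
    have hvsup : ∀ x ∈ s, ‖u x - u₀ x‖ ≤ n := by
      intro x hx
      have h0 := hv.1 0 (Nat.zero_le _) x hx
      rwa [norm_iteratedFDerivWithin_zero] at h0
    have hgd : DifferentiableOn ℝ g t :=
      hg.differentiableOn (by simp)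
    have hg1 : ∀ z ∈ t, ‖fderivWithin ℝ g t z‖ ≤ c := by
      intro z hz
      rw [norm_fderivWithin_eq_one ht hz]
      exact hgb 1 (by omega) z hz
    have hsup : ∀ x ∈ s, ‖g (u x) - g (u₀ x)‖ ≤ c * n := by
      intro x hx
      calc ‖g (u x) - g (u₀ x)‖ ≤ c * ‖u x - u₀ x‖ :=
            hconvt.norm_image_sub_le_of_norm_fderivWithin_le hgd hg1 (hu₀t hx) (hut hx)
        _ ≤ c * n := mul_le_mul_of_nonneg_left (hvsup x hx) hc
    have hvcd : ContDiffOn ℝ (K'+1) (fun x => u x - u₀ x) s := hu.sub hu₀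
    -- derivative of g: C^{i+2} with same bounds
    have hg' : ContDiffOn ℝ (i+2) (fderivWithin ℝ g t) t :=
      hg.fderivWithin ht (by push_cast; exact le_rfl)
    have hg'b : ∀ j, j ≤ i+2 → ∀ z ∈ t,
        ‖iteratedFDerivWithin ℝ j (fderivWithin ℝ g t) t z‖ ≤ c := by
      intro j hj z hz
      rw [norm_iteratedFDerivWithin_fderivWithin ht hz]
      exact hgb (j+1) (Nat.succ_le_succ hj) z hz
    -- term 1 first factor: difference of derivatives of g along u and u₀
    have hT1a : CN i lam s (fun x => fderivWithin ℝ g t (u x) - fderivWithin ℝ g t (u₀ x))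
        (Cm * c * n) :=
      hCmp (P →L[ℝ] W) (fderivWithin ℝ g t) c hc hg' hg'b u hu hut hcu n hn hv
    -- term 1 second factor: derivative of u
    have hcdDu : ContDiffOn ℝ K' (fderivWithin ℝ u s) s :=
      hu.fderivWithin hs (by push_cast; exact le_rfl)
    have hDu : CN i lam s (fderivWithin ℝ u s) ((max 1 R)^(K'+1) * M) := by
      have h1 : CN K' lam s (fderivWithin ℝ u s) M := ((cn_succ_iff hs).1 hcu).2
      have h2 := cn_of_le hconvs hs hR hl0 hl1 hiK' hM hcdDu h1
      exact cn_mono (mul_le_mul_of_nonneg_right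
        (pow_le_pow_right₀ hm1 (Nat.le_succ K')) hM) h2
    -- term 2 first factor: derivative of g along u₀
    have hT2a : CN i lam s (fun x => fderivWithin ℝ g t (u₀ x)) (Cp * c) :=
      hCpp (P →L[ℝ] W) (fderivWithin ℝ g t) c hc
        (hg'.of_le (by exact_mod_cast Nat.le_succ (i+1)))
        (fun j hj z hz => hg'b j (hj.trans (Nat.le_succ (i+1))) z hz)
    -- term 2 second factor: derivative of v
    have hcdDv : ContDiffOn ℝ K' (fderivWithin ℝ (fun x => u x - u₀ x) s) s :=
      hvcd.fderivWithin hs (by push_cast; exact le_rfl)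
    have hDv : CN i lam s (fderivWithin ℝ (fun x => u x - u₀ x) s)
        ((max 1 R)^(K'+1) * n) := by
      have h1 : CN K' lam s (fderivWithin ℝ (fun x => u x - u₀ x) s) n :=
        ((cn_succ_iff hs).1 hv).2
      have h2 := cn_of_le hconvs hs hR hl0 hl1 hiK' hn hcdDv h1
      exact cn_mono (mul_le_mul_of_nonneg_right
        (pow_le_pow_right₀ hm1 (Nat.le_succ K')) hn) h2
    rw [cn_succ_iff hs]
    constructor
    · intro x hx
      calc ‖g (u x) - g (u₀ x)‖ ≤ c * n := hsup x hx
        _ = 1 * (c * n) := (one_mul _).symm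
        _ ≤ (1 + ((2 * max 1 R + 2)^(i+1) * Cm * ((max 1 R)^(K'+1) * M)
              + (2 * max 1 R + 2)^(i+1) * Cp * (max 1 R)^(K'+1))) * (c * n) := by
            apply mul_le_mul_of_nonneg_right _ (by positivity)
            have : (0:ℝ) ≤ (2 * max 1 R + 2)^(i+1) * Cm * ((max 1 R)^(K'+1) * M)
                + (2 * max 1 R + 2)^(i+1) * Cp * (max 1 R)^(K'+1) := by positivity
            linarith
        _ = (1 + ((2 * max 1 R + 2)^(i+1) * Cm * ((max 1 R)^(K'+1) * M)
              + (2 * max 1 R + 2)^(i+1) * Cp * (max 1 R)^(K'+1))) * c * n := by ring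
    · -- the derivative decomposition
      have hdu : ∀ y ∈ s, DifferentiableWithinAt ℝ u s y :=
        fun y hy => (hu.differentiableOn (by simp)) y hy
      have hdu₀ : ∀ y ∈ s, DifferentiableWithinAt ℝ u₀ s y :=
        fun y hy => (hu₀.differentiableOn (by simp)) y hy
      have heq : EqOn (fderivWithin ℝ (fun x => g (u x) - g (u₀ x)) s)
          (fun y => (ContinuousLinearMap.compL ℝ E P W)
              (fderivWithin ℝ g t (u y) - fderivWithin ℝ g t (u₀ y)) (fderivWithin ℝ u s y)
            + (ContinuousLinearMap.compL ℝ E P W) (fderivWithin ℝ g t (u₀ y))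
              (fderivWithin ℝ (fun x => u x - u₀ x) s y)) s := by
        intro y hy
        have hgu : DifferentiableWithinAt ℝ (fun x => g (u x)) s y :=
          (hgd _ (hut hy)).comp y (hdu y hy) hut
        have hgu₀ : DifferentiableWithinAt ℝ (fun x => g (u₀ x)) s y :=
          (hgd _ (hu₀t hy)).comp y (hdu₀ y hy) hu₀t
        have h1 : fderivWithin ℝ (fun x => g (u x) - g (u₀ x)) s y
            = fderivWithin ℝ (fun x => g (u x)) s y - fderivWithin ℝ (fun x => g (u₀ x)) s y :=
          fderivWithin_sub (hs y hy) hgu hgu₀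
        have h2 : fderivWithin ℝ (fun x => g (u x)) s y
            = (fderivWithin ℝ g t (u y)).comp (fderivWithin ℝ u s y) :=
          fderivWithin_comp y (hgd _ (hut hy)) (hdu y hy) hut (hs y hy)
        have h3 : fderivWithin ℝ (fun x => g (u₀ x)) s y
            = (fderivWithin ℝ g t (u₀ y)).comp (fderivWithin ℝ u₀ s y) :=
          fderivWithin_comp y (hgd _ (hu₀t hy)) (hdu₀ y hy) hu₀t (hs y hy)
        have h4 : fderivWithin ℝ (fun x => u x - u₀ x) s y
            = fderivWithin ℝ u s y - fderivWithin ℝ u₀ s y :=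
          fderivWithin_sub (hs y hy) (hdu y hy) (hdu₀ y hy)
        rw [h1, h2, h3]
        show _ = (fderivWithin ℝ g t (u y) - fderivWithin ℝ g t (u₀ y)).comp
            (fderivWithin ℝ u s y)
          + (fderivWithin ℝ g t (u₀ y)).comp (fderivWithin ℝ (fun x => u x - u₀ x) s y)
        rw [h4, ContinuousLinearMap.sub_comp, ContinuousLinearMap.comp_sub]
        abel
      apply cn_congr heq.symm
      -- smoothness of the pieces
      have hile : ((i:ℕ) : WithTop ℕ∞) ≤ ((i+2 : ℕ) : WithTop ℕ∞) := by
        exact_mod_cast Nat.le_add_right i 2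
      have hiKle : ((i:ℕ) : WithTop ℕ∞) ≤ ((K'+1 : ℕ) : WithTop ℕ∞) := by
        exact_mod_cast le_trans (Nat.le_succ i) hiK
      have hcdT1a : ContDiffOn ℝ i
          (fun x => fderivWithin ℝ g t (u x) - fderivWithin ℝ g t (u₀ x)) s :=
        ((hg'.of_le hile).comp (hu.of_le hiKle) hut).sub
          ((hg'.of_le hile).comp (hu₀.of_le hiKle) hu₀t)
      have hcdT2a : ContDiffOn ℝ i (fun x => fderivWithin ℝ g t (u₀ x)) s :=
        (hg'.of_le hile).comp (hu₀.of_le hiKle) hu₀t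
      have hcdDu' : ContDiffOn ℝ i (fderivWithin ℝ u s) s :=
        hcdDu.of_le (by exact_mod_cast hiK')
      have hcdDv' : ContDiffOn ℝ i (fderivWithin ℝ (fun x => u x - u₀ x) s) s :=
        hcdDv.of_le (by exact_mod_cast hiK')
      have hbil1 := cn_bilin_aux hconvs hs hR hl0 hl1 i (ContinuousLinearMap.compL ℝ E P W)
        1 zero_le_one (compL_nb W)
        (fun x => fderivWithin ℝ g t (u x) - fderivWithin ℝ g t (u₀ x)) (fderivWithin ℝ u s)
        (Cm * c * n) ((max 1 R)^(K'+1) * M) (by positivity) (by positivity)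
        hcdT1a hcdDu' hT1a hDu
      have hbil2 := cn_bilin_aux hconvs hs hR hl0 hl1 i (ContinuousLinearMap.compL ℝ E P W)
        1 zero_le_one (compL_nb W)
        (fun x => fderivWithin ℝ g t (u₀ x)) (fderivWithin ℝ (fun x => u x - u₀ x) s)
        (Cp * c) ((max 1 R)^(K'+1) * n) (by positivity) (by positivity)
        hcdT2a hcdDv' hT2a hDv
      have hct1 : ContDiffOn ℝ i (fun y => (ContinuousLinearMap.compL ℝ E P W)
          (fderivWithin ℝ g t (u y) - fderivWithin ℝ g t (u₀ y)) (fderivWithin ℝ u s y)) s :=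
        (ContinuousLinearMap.compL ℝ E P W).isBoundedBilinearMap.contDiff.comp₂_contDiffOn
          hcdT1a hcdDu'
      have hct2 : ContDiffOn ℝ i (fun y => (ContinuousLinearMap.compL ℝ E P W)
          (fderivWithin ℝ g t (u₀ y)) (fderivWithin ℝ (fun x => u x - u₀ x) s y)) s :=
        (ContinuousLinearMap.compL ℝ E P W).isBoundedBilinearMap.contDiff.comp₂_contDiffOn
          hcdT2a hcdDv'
      have hsum := cn_add hs hct1 hct2 hbil1 hbil2
      apply cn_mono _ hsum
      calc (2 * max 1 R + 2)^(i+1) * 1 * (Cm * c * n) * ((max 1 R)^(K'+1) * M)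
            + (2 * max 1 R + 2)^(i+1) * 1 * (Cp * c) * ((max 1 R)^(K'+1) * n)
          = ((2 * max 1 R + 2)^(i+1) * Cm * ((max 1 R)^(K'+1) * M)
              + (2 * max 1 R + 2)^(i+1) * Cp * (max 1 R)^(K'+1)) * (c * n) := by ring
        _ ≤ (1 + ((2 * max 1 R + 2)^(i+1) * Cm * ((max 1 R)^(K'+1) * M)
              + (2 * max 1 R + 2)^(i+1) * Cp * (max 1 R)^(K'+1))) * (c * n) := by
            apply mul_le_mul_of_nonneg_right _ (by positivity)
            linarith
        _ = (1 + ((2 * max 1 R + 2)^(i+1) * Cm * ((max 1 R)^(K'+1) * M)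
              + (2 * max 1 R + 2)^(i+1) * Cp * (max 1 R)^(K'+1))) * c * n := by ring

end Main

section Final

/-- **Lemma 2.1** (composition estimate in Hölder spaces).  Let `U ⊂ ℝ^m` and `V ⊂ ℝ^p` be
convex precompact open sets, `k ≥ 1` an integer, `λ ∈ [0,1)`.  Given `f ∈ C^{k+2}(V̄;ℝ)`
and `u₀ ∈ C^{k,λ}(Ū;V)`, there are `δ > 0` and `C` such that for all `u ∈ C^{k,λ}(Ū;V)`
with `‖u − u₀‖_{k,λ;Ū} ≤ δ` one has `‖f∘u − f∘u₀‖_{k,λ;Ū} ≤ C ‖u − u₀‖_{k,λ;Ū}`. -/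
theorem holder_composition_estimate {m p : ℕ}
    (U : Set (EuclideanSpace ℝ (Fin m))) (V : Set (EuclideanSpace ℝ (Fin p)))
    (hUo : IsOpen U) (hUconv : Convex ℝ U) (hUpre : IsCompact (closure U))
    (hVo : IsOpen V) (hVconv : Convex ℝ V) (hVpre : IsCompact (closure V))
    (k : ℕ) (hk : 1 ≤ k) (lam : ℝ) (hlam : lam ∈ Ico (0 : ℝ) 1)
    (f : EuclideanSpace ℝ (Fin p) → ℝ) (hf : HolderSpaceMem (k + 2) 0 V f)
    (u₀ : EuclideanSpace ℝ (Fin m) → EuclideanSpace ℝ (Fin p))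
    (hu₀ : HolderSpaceMem k lam U u₀) (hu₀V : MapsTo u₀ (closure U) V) :
    ∃ δ : ℝ, 0 < δ ∧ ∃ C : ℝ,
      ∀ u : EuclideanSpace ℝ (Fin m) → EuclideanSpace ℝ (Fin p),
        HolderSpaceMem k lam U u → MapsTo u (closure U) V →
        holderSpaceNorm k lam U (u - u₀) ≤ δ →
        holderSpaceNorm k lam U (f ∘ u - f ∘ u₀) ≤ C * holderSpaceNorm k lam U (u - u₀) := by
  have hl0 : 0 ≤ lam := hlam.1
  have hl1 : lam ≤ 1 := le_of_lt hlam.2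
  rcases eq_empty_or_nonempty (closure U) with hUe | hUne
  · -- degenerate case: the closure is empty and all the norms vanish
    refine ⟨1, one_pos, 0, fun u hu huV hle => ?_⟩
    haveI hie : IsEmpty ((closure U) : Set (EuclideanSpace ℝ (Fin m))) :=
      Set.isEmpty_coe_sort.2 hUe
    haveI hie2 : IsEmpty ↥((closure U) ×ˢ (closure U)) :=
      Set.isEmpty_coe_sort.2 (by rw [hUe]; exact Set.empty_prod)
    have hz1 : holderSpaceNorm k lam U (f ∘ u - f ∘ u₀) = 0 := by
      simp [holderSpaceNorm, Real.iSup_of_isEmpty]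
    have hz2 : holderSpaceNorm k lam U (u - u₀) = 0 := by
      simp [holderSpaceNorm, Real.iSup_of_isEmpty]
    rw [hz1, hz2]
    norm_num
  · -- the main case
    obtain ⟨x₀, hx₀⟩ : U.Nonempty := closure_nonempty_iff.1 hUne
    have hsU : UniqueDiffOn ℝ (closure U) :=
      uniqueDiffOn_convex hUconv.closure
        ⟨x₀, interior_maximal subset_closure hUo hx₀⟩
    have htU : UniqueDiffOn ℝ (closure V) :=
      uniqueDiffOn_convex hVconv.closure
        ⟨u₀ x₀, interior_maximal subset_closure hVo (hu₀V (subset_closure hx₀))⟩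
    -- diameter bound
    obtain ⟨r, hr⟩ := hUpre.isBounded.subset_closedBall 0
    have hR : ∀ x ∈ closure U, ∀ y ∈ closure U, ‖x - y‖ ≤ 2 * r := by
      intro x hx y hy
      have h1 : ‖x‖ ≤ r := by
        have := hr hx; rwa [Metric.mem_closedBall, dist_zero_right] at this
      have h2 : ‖y‖ ≤ r := by
        have := hr hy; rwa [Metric.mem_closedBall, dist_zero_right] at this
      calc ‖x - y‖ ≤ ‖x‖ + ‖y‖ := norm_sub_le _ _
        _ ≤ 2 * r := by linarith
    -- bounds for f
    have hfcd : ContDiffOn ℝ (k+2) f (closure V) := hf.1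
    have hfb0 : ∀ j : ℕ, ∃ c : ℝ, j ≤ k+2 →
        ∀ z ∈ closure V, ‖iteratedFDerivWithin ℝ j f (closure V) z‖ ≤ c := by
      intro j
      by_cases hj : j ≤ k+2
      · obtain ⟨c, hc⟩ := hVpre.exists_bound_of_continuousOn
          (hfcd.continuousOn_iteratedFDerivWithin (by exact_mod_cast hj) htU)
        exact ⟨c, fun _ => hc⟩
      · exact ⟨0, fun h => absurd h hj⟩
    choose cf0 hcf0 using hfb0
    have hcfnn : (0:ℝ) ≤ ∑ j ∈ Finset.range (k+3), max (cf0 j) 0 :=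
      Finset.sum_nonneg (fun j _ => le_max_right _ _)
    have hcfb : ∀ j, j ≤ k+2 → ∀ z ∈ closure V,
        ‖iteratedFDerivWithin ℝ j f (closure V) z‖ ≤ ∑ j ∈ Finset.range (k+3), max (cf0 j) 0 := by
      intro j hj z hz
      calc ‖iteratedFDerivWithin ℝ j f (closure V) z‖ ≤ cf0 j := hcf0 j hj z hz
        _ ≤ max (cf0 j) 0 := le_max_left _ _
        _ ≤ ∑ j ∈ Finset.range (k+3), max (cf0 j) 0 :=
            Finset.single_le_sum (fun i _ => le_max_right (cf0 i) 0)
              (Finset.mem_range.2 (by omega))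
    set cf : ℝ := ∑ j ∈ Finset.range (k+3), max (cf0 j) 0 with hcfdef
    -- CN bound for u₀
    have hu₀cd : ContDiffOn ℝ k u₀ (closure U) := hu₀.1
    obtain ⟨Ch0, hCh0⟩ := hu₀.2
    have hub0 : ∀ j : ℕ, ∃ c : ℝ, j ≤ k →
        ∀ z ∈ closure U, ‖iteratedFDerivWithin ℝ j u₀ (closure U) z‖ ≤ c := by
      intro j
      by_cases hj : j ≤ k
      · obtain ⟨c, hc⟩ := hUpre.exists_bound_of_continuousOn
          (hu₀cd.continuousOn_iteratedFDerivWithin (by exact_mod_cast hj) hsU)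
        exact ⟨c, fun _ => hc⟩
      · exact ⟨0, fun h => absurd h hj⟩
    choose cu0 hcu0 using hub0
    set M0 : ℝ := (∑ j ∈ Finset.range (k+1), max (cu0 j) 0) + max Ch0 0 with hM0def
    have hM0nn : 0 ≤ M0 := by
      apply add_nonneg (Finset.sum_nonneg (fun j _ => le_max_right _ _)) (le_max_right _ _)
    have hcu₀ : CN k lam (closure U) u₀ M0 := by
      constructor
      · intro j hj x hx
        calc ‖iteratedFDerivWithin ℝ j u₀ (closure U) x‖ ≤ cu0 j := hcu0 j hj x hx
          _ ≤ max (cu0 j) 0 := le_max_left _ _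
          _ ≤ ∑ j ∈ Finset.range (k+1), max (cu0 j) 0 :=
              Finset.single_le_sum (fun i _ => le_max_right (cu0 i) 0)
                (Finset.mem_range.2 (by omega))
          _ ≤ M0 := by rw [hM0def]; linarith [le_max_right Ch0 0]
      · intro x hx y hy
        calc ‖iteratedFDerivWithin ℝ k u₀ (closure U) x
              - iteratedFDerivWithin ℝ k u₀ (closure U) y‖ ≤ Ch0 * ‖x - y‖ ^ lam :=
              hCh0 x hx y hy
          _ ≤ M0 * ‖x - y‖ ^ lam := by
              apply mul_le_mul_of_nonneg_right _ (Real.rpow_nonneg (norm_nonneg _) _)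
              rw [hM0def]
              have := Finset.sum_nonneg
                (fun j (_ : j ∈ Finset.range (k+1)) => le_max_right (cu0 j) 0)
              linarith [le_max_left Ch0 0]
    have hcu₀M : CN k lam (closure U) u₀ (M0 + 2) := cn_mono (by linarith) hcu₀
    have hu₀t : MapsTo u₀ (closure U) (closure V) :=
      fun x hx => subset_closure (hu₀V hx)
    obtain ⟨Cm, hCm0, hCmp⟩ := cn_main hUconv.closure hsU hVconv.closure htU hR hl0 hl1 hk
      hu₀cd hu₀t (by linarith) hcu₀M k le_rfl
    refine ⟨1, one_pos, ((k:ℝ)+2) * (Cm * cf) * 2, ?_⟩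
    intro u hu huV hle
    have hucd : ContDiffOn ℝ k u (closure U) := hu.1
    have hvcd : ContDiffOn ℝ k (u - u₀) (closure U) := hucd.sub hu₀cd
    have hut : MapsTo u (closure U) (closure V) := fun x hx => subset_closure (huV hx)
    -- splitting of the Hölder norm of u - u₀
    have hnsplit : holderSpaceNorm k lam U (u - u₀) =
        (∑ i ∈ Finset.range (k + 1),
          ⨆ x : (closure U), ‖iteratedFDerivWithin ℝ i (u - u₀) (closure U)
            (x : EuclideanSpace ℝ (Fin m))‖) +
        (if lam = 0 then 0 else
          ⨆ q : (closure U) ×ˢ (closure U),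
            ‖iteratedFDerivWithin ℝ k (u - u₀) (closure U)
                (q : EuclideanSpace ℝ (Fin m) × EuclideanSpace ℝ (Fin m)).1 -
              iteratedFDerivWithin ℝ k (u - u₀) (closure U)
                (q : EuclideanSpace ℝ (Fin m) × EuclideanSpace ℝ (Fin m)).2‖ /
              ‖(q : EuclideanSpace ℝ (Fin m) × EuclideanSpace ℝ (Fin m)).1 -
                (q : EuclideanSpace ℝ (Fin m) × EuclideanSpace ℝ (Fin m)).2‖ ^ lam) := rfl
    have hSnn : ∀ i : ℕ, 0 ≤ ⨆ x : (closure U),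
        ‖iteratedFDerivWithin ℝ i (u - u₀) (closure U) (x : EuclideanSpace ℝ (Fin m))‖ :=
      fun i => Real.iSup_nonneg (fun x => norm_nonneg _)
    have hTnn : 0 ≤ (if lam = 0 then (0:ℝ) else
        ⨆ q : (closure U) ×ˢ (closure U),
          ‖iteratedFDerivWithin ℝ k (u - u₀) (closure U)
              (q : EuclideanSpace ℝ (Fin m) × EuclideanSpace ℝ (Fin m)).1 -
            iteratedFDerivWithin ℝ k (u - u₀) (closure U)
              (q : EuclideanSpace ℝ (Fin m) × EuclideanSpace ℝ (Fin m)).2‖ /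
            ‖(q : EuclideanSpace ℝ (Fin m) × EuclideanSpace ℝ (Fin m)).1 -
              (q : EuclideanSpace ℝ (Fin m) × EuclideanSpace ℝ (Fin m)).2‖ ^ lam) := by
      split
      · exact le_rfl
      · exact Real.iSup_nonneg fun q =>
          div_nonneg (norm_nonneg _) (Real.rpow_nonneg (norm_nonneg _) _)
    have hn0 : 0 ≤ holderSpaceNorm k lam U (u - u₀) := by
      rw [hnsplit]
      exact add_nonneg (Finset.sum_nonneg fun i _ => hSnn i) hTnn
    have hSle : ∀ i, i ∈ Finset.range (k+1) →
        (⨆ x : (closure U), ‖iteratedFDerivWithin ℝ i (u - u₀) (closure U)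
          (x : EuclideanSpace ℝ (Fin m))‖) ≤ holderSpaceNorm k lam U (u - u₀) := by
      intro i hi
      rw [hnsplit]
      have h1 := Finset.single_le_sum (fun j (_ : j ∈ Finset.range (k+1)) => hSnn j) hi
      linarith
    have hTle : (if lam = 0 then (0:ℝ) else
        ⨆ q : (closure U) ×ˢ (closure U),
          ‖iteratedFDerivWithin ℝ k (u - u₀) (closure U)
              (q : EuclideanSpace ℝ (Fin m) × EuclideanSpace ℝ (Fin m)).1 -
            iteratedFDerivWithin ℝ k (u - u₀) (closure U)
              (q : EuclideanSpace ℝ (Fin m) × EuclideanSpace ℝ (Fin m)).2‖ /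
            ‖(q : EuclideanSpace ℝ (Fin m) × EuclideanSpace ℝ (Fin m)).1 -
              (q : EuclideanSpace ℝ (Fin m) × EuclideanSpace ℝ (Fin m)).2‖ ^ lam)
        ≤ holderSpaceNorm k lam U (u - u₀) := by
      rw [hnsplit]
      have h1 := Finset.sum_nonneg (fun j (_ : j ∈ Finset.range (k+1)) => hSnn j)
      linarith
    -- pointwise sup bounds
    have hptw : ∀ j, j ≤ k → ∀ x ∈ closure U,
        ‖iteratedFDerivWithin ℝ j (u - u₀) (closure U) x‖
          ≤ holderSpaceNorm k lam U (u - u₀) := by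
      intro j hj x hx
      obtain ⟨b, hb⟩ := hUpre.exists_bound_of_continuousOn
        (hvcd.continuousOn_iteratedFDerivWithin (by exact_mod_cast hj) hsU)
      have hBdd : BddAbove (Set.range fun x : (closure U) =>
          ‖iteratedFDerivWithin ℝ j (u - u₀) (closure U)
            (x : EuclideanSpace ℝ (Fin m))‖) := by
        refine ⟨b, ?_⟩
        rintro _ ⟨z, rfl⟩
        exact hb z z.2
      exact (le_ciSup hBdd (⟨x, hx⟩ : (closure U))).trans
        (hSle j (Finset.mem_range.2 (by omega)))
    -- difference formula at order k
    have hsub : ∀ x ∈ closure U, iteratedFDerivWithin ℝ k (u - u₀) (closure U) x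
        = iteratedFDerivWithin ℝ k u (closure U) x
          - iteratedFDerivWithin ℝ k u₀ (closure U) x := by
      intro x hx
      rw [sub_eq_add_neg u u₀,
        iteratedFDerivWithin_add_apply (g := -u₀) (hucd x hx) (hu₀cd.neg x hx) hsU hx,
        iteratedFDerivWithin_neg_apply hsU hx, ← sub_eq_add_neg]
    obtain ⟨Cu, hCu⟩ := hu.2
    have hqb : ∀ x ∈ closure U, ∀ y ∈ closure U,
        ‖iteratedFDerivWithin ℝ k (u - u₀) (closure U) x
          - iteratedFDerivWithin ℝ k (u - u₀) (closure U) y‖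
          ≤ (Cu + Ch0) * ‖x - y‖ ^ lam := by
      intro x hx y hy
      rw [hsub x hx, hsub y hy]
      have hre : iteratedFDerivWithin ℝ k u (closure U) x
            - iteratedFDerivWithin ℝ k u₀ (closure U) x
          - (iteratedFDerivWithin ℝ k u (closure U) y
            - iteratedFDerivWithin ℝ k u₀ (closure U) y)
          = (iteratedFDerivWithin ℝ k u (closure U) x
            - iteratedFDerivWithin ℝ k u (closure U) y)
          - (iteratedFDerivWithin ℝ k u₀ (closure U) x
            - iteratedFDerivWithin ℝ k u₀ (closure U) y) := by abel
      rw [hre, add_mul]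
      exact (norm_sub_le _ _).trans (add_le_add (hCu x hx y hy) (hCh0 x hx y hy))
    -- the CN bound for v = u - u₀
    have hvCN : CN k lam (closure U) (u - u₀) (2 * holderSpaceNorm k lam U (u - u₀)) := by
      constructor
      · intro j hj x hx
        have := hptw j hj x hx
        linarith
      · intro x hx y hy
        by_cases hlz : lam = 0
        · subst hlz
          simp only [Real.rpow_zero, mul_one]
          have h1 := hptw k le_rfl x hx
          have h2 := hptw k le_rfl y hy
          calc ‖iteratedFDerivWithin ℝ k (u - u₀) (closure U) x
                - iteratedFDerivWithin ℝ k (u - u₀) (closure U) y‖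
              ≤ ‖iteratedFDerivWithin ℝ k (u - u₀) (closure U) x‖
                + ‖iteratedFDerivWithin ℝ k (u - u₀) (closure U) y‖ := norm_sub_le _ _
            _ ≤ 2 * holderSpaceNorm k 0 U (u - u₀) := by linarith
        · by_cases hxy : x = y
          · subst hxy
            simp only [sub_self, norm_zero]
            exact mul_nonneg (by linarith) (Real.rpow_nonneg le_rfl _)
          · have hd0 : (0:ℝ) < ‖x - y‖ ^ lam :=
              Real.rpow_pos_of_pos (norm_pos_iff.2 (sub_ne_zero.2 hxy)) _
            have hTub : BddAbove (Set.range fun q : ↥((closure U) ×ˢ (closure U)) =>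
                ‖iteratedFDerivWithin ℝ k (u - u₀) (closure U)
                    (q : EuclideanSpace ℝ (Fin m) × EuclideanSpace ℝ (Fin m)).1 -
                  iteratedFDerivWithin ℝ k (u - u₀) (closure U)
                    (q : EuclideanSpace ℝ (Fin m) × EuclideanSpace ℝ (Fin m)).2‖ /
                  ‖(q : EuclideanSpace ℝ (Fin m) × EuclideanSpace ℝ (Fin m)).1 -
                    (q : EuclideanSpace ℝ (Fin m) × EuclideanSpace ℝ (Fin m)).2‖ ^ lam) := by
              refine ⟨max (Cu + Ch0) 0, ?_⟩
              rintro _ ⟨q, rfl⟩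
              obtain ⟨hq1, hq2⟩ := Set.mem_prod.1 q.2
              by_cases hqe : (q : EuclideanSpace ℝ (Fin m) × EuclideanSpace ℝ (Fin m)).1
                  = (q : EuclideanSpace ℝ (Fin m) × EuclideanSpace ℝ (Fin m)).2
              · simp only [hqe, sub_self, norm_zero, zero_div]
                exact le_max_right _ _
              · have hdq : (0:ℝ) < ‖(q : EuclideanSpace ℝ (Fin m) ×
                    EuclideanSpace ℝ (Fin m)).1 - (q : EuclideanSpace ℝ (Fin m) ×
                    EuclideanSpace ℝ (Fin m)).2‖ ^ lam :=
                  Real.rpow_pos_of_pos (norm_pos_iff.2 (sub_ne_zero.2 hqe)) _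
                rw [div_le_iff₀ hdq]
                calc ‖iteratedFDerivWithin ℝ k (u - u₀) (closure U) _ -
                      iteratedFDerivWithin ℝ k (u - u₀) (closure U) _‖
                    ≤ (Cu + Ch0) * ‖_ - _‖ ^ lam := hqb _ hq1 _ hq2
                  _ ≤ max (Cu + Ch0) 0 * ‖_ - _‖ ^ lam :=
                      mul_le_mul_of_nonneg_right (le_max_left _ _)
                        (Real.rpow_nonneg (norm_nonneg _) _)
            have hTle' := hTle
            rw [if_neg hlz] at hTle'
            have hq1 := le_ciSup hTub
              (⟨(x, y), Set.mem_prod.2 ⟨hx, hy⟩⟩ : ↥((closure U) ×ˢ (closure U)))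
            have hq2 : ‖iteratedFDerivWithin ℝ k (u - u₀) (closure U) x
                - iteratedFDerivWithin ℝ k (u - u₀) (closure U) y‖ / ‖x - y‖ ^ lam
                ≤ holderSpaceNorm k lam U (u - u₀) := le_trans hq1 hTle'
            calc ‖iteratedFDerivWithin ℝ k (u - u₀) (closure U) x
                  - iteratedFDerivWithin ℝ k (u - u₀) (closure U) y‖
                = (‖iteratedFDerivWithin ℝ k (u - u₀) (closure U) x
                  - iteratedFDerivWithin ℝ k (u - u₀) (closure U) y‖ / ‖x - y‖ ^ lam)
                  * ‖x - y‖ ^ lam := (div_mul_cancel₀ _ (ne_of_gt hd0)).symm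
              _ ≤ holderSpaceNorm k lam U (u - u₀) * ‖x - y‖ ^ lam :=
                  mul_le_mul_of_nonneg_right hq2 hd0.le
              _ ≤ 2 * holderSpaceNorm k lam U (u - u₀) * ‖x - y‖ ^ lam := by
                  apply mul_le_mul_of_nonneg_right _ hd0.le
                  linarith
    -- CN bound for u itself
    have hcuM : CN k lam (closure U) u (M0 + 2) := by
      have h1 : CN k lam (closure U) (fun x => u₀ x + (u - u₀) x)
          (M0 + 2 * holderSpaceNorm k lam U (u - u₀)) := cn_add hsU hu₀cd hvcd hcu₀ hvCN
      have h2 : EqOn (fun x => u₀ x + (u - u₀) x) u (closure U) := fun x hx => by simp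
      exact cn_mono (by linarith) (cn_congr h2 h1)
    -- apply the main composition estimate
    have hF : CN k lam (closure U) (fun x => f (u x) - f (u₀ x))
        (Cm * cf * (2 * holderSpaceNorm k lam U (u - u₀))) :=
      hCmp ℝ f cf hcfnn hfcd hcfb u hucd hut hcuM
        (2 * holderSpaceNorm k lam U (u - u₀)) (by linarith) hvCN
    -- assemble the final bound
    have hB0 : 0 ≤ Cm * cf * (2 * holderSpaceNorm k lam U (u - u₀)) :=
      mul_nonneg (mul_nonneg hCm0 hcfnn) (by linarith)
    have hFfun : (f ∘ u - f ∘ u₀) = (fun x => f (u x) - f (u₀ x)) := rfl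
    calc holderSpaceNorm k lam U (f ∘ u - f ∘ u₀)
        = (∑ i ∈ Finset.range (k + 1),
            ⨆ x : (closure U), ‖iteratedFDerivWithin ℝ i (f ∘ u - f ∘ u₀) (closure U)
              (x : EuclideanSpace ℝ (Fin m))‖) +
          (if lam = 0 then 0 else
            ⨆ q : (closure U) ×ˢ (closure U),
              ‖iteratedFDerivWithin ℝ k (f ∘ u - f ∘ u₀) (closure U)
                  (q : EuclideanSpace ℝ (Fin m) × EuclideanSpace ℝ (Fin m)).1 -
                iteratedFDerivWithin ℝ k (f ∘ u - f ∘ u₀) (closure U)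
                  (q : EuclideanSpace ℝ (Fin m) × EuclideanSpace ℝ (Fin m)).2‖ /
                ‖(q : EuclideanSpace ℝ (Fin m) × EuclideanSpace ℝ (Fin m)).1 -
                  (q : EuclideanSpace ℝ (Fin m) × EuclideanSpace ℝ (Fin m)).2‖ ^ lam) := rfl
      _ ≤ (∑ _i ∈ Finset.range (k + 1),
            Cm * cf * (2 * holderSpaceNorm k lam U (u - u₀)))
          + Cm * cf * (2 * holderSpaceNorm k lam U (u - u₀)) := by
          apply add_le_add
          · apply Finset.sum_le_sum
            intro i hi
            apply Real.iSup_le _ hB0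
            intro x
            rw [hFfun]
            exact hF.1 i (by
              have := Finset.mem_range.1 hi; omega) x x.2
          · split
            · exact hB0
            · apply Real.iSup_le _ hB0
              intro q
              obtain ⟨hq1, hq2⟩ := Set.mem_prod.1 q.2
              by_cases hqe : (q : EuclideanSpace ℝ (Fin m) × EuclideanSpace ℝ (Fin m)).1
                  = (q : EuclideanSpace ℝ (Fin m) × EuclideanSpace ℝ (Fin m)).2
              · simp only [hqe, sub_self, norm_zero, zero_div]
                exact hB0
              · have hdq : (0:ℝ) < ‖(q : EuclideanSpace ℝ (Fin m) ×
                    EuclideanSpace ℝ (Fin m)).1 - (q : EuclideanSpace ℝ (Fin m) ×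
                    EuclideanSpace ℝ (Fin m)).2‖ ^ lam :=
                  Real.rpow_pos_of_pos (norm_pos_iff.2 (sub_ne_zero.2 hqe)) _
                rw [div_le_iff₀ hdq, hFfun]
                exact hF.2 _ hq1 _ hq2
      _ = ((k:ℝ)+1) * (Cm * cf * (2 * holderSpaceNorm k lam U (u - u₀)))
          + Cm * cf * (2 * holderSpaceNorm k lam U (u - u₀)) := by
          rw [Finset.sum_const, Finset.card_range, nsmul_eq_mul]
          push_cast
          ring
      _ = (((k:ℝ)+2) * (Cm * cf) * 2) * holderSpaceNorm k lam U (u - u₀) := by ring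

end Final
end
end

section
/- Under these hypotheses, let K ⊂ U₀ be compact and fix constants C₁ > 0 and α ∈ (0,λ). Then there exists ε > 0 such that for every x₀ ∈ K the following hold: every γ ∈ 𝒳(x₀,C₁,α,ε) satisfies γ(t) ∈ U for all t ∈ (0,ε] and (1/2)t ≤ y(γ(t)) ≤ (3/2)t for all t ∈ [0,ε] (where y(γ(t)) denotes the last component of γ(t)); the integrals ∫₀ᵗ A(γ(τ)) dτ and ∫₀ᵗ B(γ(τ)) dτ converge for every t ∈ [0,ε]; and the map T sends 𝒳(x₀,C₁,α,ε) into itself. -/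
open Set MeasureTheory

noncomputable section

/-- Membership in the space `𝒳(x₀,C₁,α,ε)` of continuous curves
`γ(t) = (x₀ + a(t), t + b(t))` on `[0,ε]` with `|a(t)| ≤ C₁ t^α` and
`|b(t)| ≤ C₁ t^{α+1}`. -/
def InX {m : ℕ} (x₀ : EuclideanSpace ℝ (Fin m)) (C₁ α ε : ℝ)
    (γ : ℝ → EuclideanSpace ℝ (Fin m) × ℝ) : Prop :=
  ContinuousOn γ (Icc 0 ε) ∧
    ∀ t ∈ Icc (0:ℝ) ε, ‖(γ t).1 - x₀‖ ≤ C₁ * t ^ α ∧ |(γ t).2 - t| ≤ C₁ * t ^ (α + 1)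

/-- The Picard-type map `T` associated to the vector field `(A, 1 + B)`:
`(Tγ)(t) = (x₀ + ∫₀ᵗ A(γ(τ)) dτ, t + ∫₀ᵗ B(γ(τ)) dτ)`. -/
noncomputable def Tmap {m : ℕ}
    (A : EuclideanSpace ℝ (Fin m) × ℝ → EuclideanSpace ℝ (Fin m))
    (B : EuclideanSpace ℝ (Fin m) × ℝ → ℝ)
    (x₀ : EuclideanSpace ℝ (Fin m)) (γ : ℝ → EuclideanSpace ℝ (Fin m) × ℝ) :
    ℝ → EuclideanSpace ℝ (Fin m) × ℝ :=
  fun t => (x₀ + ∫ τ in (0:ℝ)..t, A (γ τ), t + ∫ τ in (0:ℝ)..t, B (γ τ))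

open Filter

lemma euclid_norm_le_aux {m : ℕ} (x : EuclideanSpace ℝ (Fin m)) {M : ℝ} (hM : 0 ≤ M)
    (h : ∀ i, |x i| ≤ M) : ‖x‖ ≤ Real.sqrt m * M := by
  rw [EuclideanSpace.norm_eq]
  have hsum : ∑ i, ‖x i‖ ^ 2 ≤ (m : ℝ) * M ^ 2 := by
    calc ∑ i, ‖x i‖ ^ 2 ≤ ∑ _i : Fin m, M ^ 2 :=
          Finset.sum_le_sum fun i _ => by
            have := h i
            have h2 : ‖x i‖ = |x i| := rfl
            nlinarith [abs_nonneg (x i)]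
      _ = (m : ℝ) * M ^ 2 := by simp [mul_comm]
  calc Real.sqrt (∑ i, ‖x i‖ ^ 2) ≤ Real.sqrt ((m : ℝ) * M ^ 2) := Real.sqrt_le_sqrt hsum
    _ = Real.sqrt m * M := by
        rw [Real.sqrt_mul (by positivity), Real.sqrt_sq hM]

lemma ev_aux (c d β : ℝ) (hβ : 0 < β) (hd : 0 < d) :
    ∀ᶠ ε in nhdsWithin (0:ℝ) (Ioi 0), c * ε ^ β < d := by
  have hc : ContinuousAt (fun x : ℝ => c * x ^ β) 0 :=
    continuousAt_const.mul (Real.continuousAt_rpow_const 0 β (Or.inr hβ.le))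
  have ht : Tendsto (fun x : ℝ => c * x ^ β) (nhdsWithin (0:ℝ) (Ioi 0)) (nhds 0) := by
    have := hc.tendsto.mono_left (nhdsWithin_le_nhds (s := Ioi (0:ℝ)))
    simpa [Real.zero_rpow hβ.ne'] using this
  exact ht.eventually_lt_const hd


/-- **The Picard map `T` sends `𝒳` into itself for small `ε`.**  Under the hypotheses on
the vector field `(A, 1+B)`, for any compact `K ⊂ U₀`, `C₁ > 0` and `α ∈ (0,λ)` there is
`ε > 0` such that for every `x₀ ∈ K` and `γ ∈ 𝒳(x₀,C₁,α,ε)`: `γ(t) ∈ U` for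
`t ∈ (0,ε]`, `t/2 ≤ y(γ(t)) ≤ 3t/2` on `[0,ε]`, the integrals defining `Tγ` converge,
and `Tγ ∈ 𝒳(x₀,C₁,α,ε)`. -/
theorem picard_map_into_itself {m : ℕ} (hm : 1 ≤ m)
    (U₀ : Set (EuclideanSpace ℝ (Fin m))) (hU₀ : IsOpen U₀)
    (ε₀ : ℝ) (hε₀ : 0 < ε₀)
    (A : EuclideanSpace ℝ (Fin m) × ℝ → EuclideanSpace ℝ (Fin m))
    (B : EuclideanSpace ℝ (Fin m) × ℝ → ℝ)
    (hV : ContDiffOn ℝ 1 (fun q => (A q, 1 + B q)) (U₀ ×ˢ Ioo 0 ε₀))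
    (C₀ : ℝ) (hC₀ : 0 < C₀) (lam : ℝ) (hlam : lam ∈ Ioo (0 : ℝ) 1)
    (hB : ∀ q ∈ U₀ ×ˢ Ioo (0:ℝ) ε₀, |B q| ≤ C₀ * q.2 ^ lam)
    (hBx : ∀ q ∈ U₀ ×ˢ Ioo (0:ℝ) ε₀, ∀ j : Fin m,
      |fderiv ℝ B q (EuclideanSpace.single j 1, 0)| ≤ C₀ * q.2 ^ lam)
    (hBy : ∀ q ∈ U₀ ×ˢ Ioo (0:ℝ) ε₀,
      |q.2 * fderiv ℝ B q (0, 1)| ≤ C₀ * q.2 ^ lam)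
    (hA : ∀ q ∈ U₀ ×ˢ Ioo (0:ℝ) ε₀, ∀ i : Fin m,
      |A q i| ≤ C₀ * q.2 ^ (lam - 1))
    (hAx : ∀ q ∈ U₀ ×ˢ Ioo (0:ℝ) ε₀, ∀ i j : Fin m,
      |fderiv ℝ (fun w => A w i) q (EuclideanSpace.single j 1, 0)| ≤ C₀ * q.2 ^ (lam - 1))
    (hAy : ∀ q ∈ U₀ ×ˢ Ioo (0:ℝ) ε₀, ∀ i : Fin m,
      |q.2 * fderiv ℝ (fun w => A w i) q (0, 1)| ≤ C₀ * q.2 ^ (lam - 1))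
    (K : Set (EuclideanSpace ℝ (Fin m))) (hK : IsCompact K) (hKU : K ⊆ U₀)
    (C₁ : ℝ) (hC₁ : 0 < C₁) (α : ℝ) (hα : α ∈ Ioo (0 : ℝ) lam) :
    ∃ ε : ℝ, 0 < ε ∧ ∀ x₀ ∈ K, ∀ γ : ℝ → EuclideanSpace ℝ (Fin m) × ℝ,
      InX x₀ C₁ α ε γ →
        (∀ t ∈ Ioc (0:ℝ) ε, γ t ∈ U₀ ×ˢ Ioo (0:ℝ) ε₀) ∧
        (∀ t ∈ Icc (0:ℝ) ε, t / 2 ≤ (γ t).2 ∧ (γ t).2 ≤ 3 * t / 2) ∧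
        (∀ t ∈ Icc (0:ℝ) ε,
          IntervalIntegrable (fun τ => A (γ τ)) volume 0 t ∧
          IntervalIntegrable (fun τ => B (γ τ)) volume 0 t) ∧
        InX x₀ C₁ α ε (Tmap A B x₀ γ) := by
  obtain ⟨hlam0, hlam1⟩ := hlam
  obtain ⟨hα0, hαlam⟩ := hα
  obtain ⟨δ, hδ, hthick⟩ := hK.exists_thickening_subset_open hU₀ hKU
  set U : Set (EuclideanSpace ℝ (Fin m) × ℝ) := U₀ ×ˢ Ioo (0:ℝ) ε₀ with hU
  have hAcont : ContinuousOn A U := continuous_fst.comp_continuousOn hV.continuousOn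
  have hBcont : ContinuousOn B U := by
    have h1 : ContinuousOn (fun q => 1 + B q) U :=
      continuous_snd.comp_continuousOn hV.continuousOn
    have : ContinuousOn (fun q => (1 + B q) - 1) U := h1.sub continuousOn_const
    simpa using this
  set MA : ℝ := Real.sqrt m * C₀ * 2 ^ (1 - lam) with hMA
  set MB : ℝ := C₀ * (3/2) ^ lam with hMB
  have hMApos : 0 < MA := by
    have : (0:ℝ) < Real.sqrt m := Real.sqrt_pos.2 (by exact_mod_cast Nat.pos_of_ne_zero (by omega))
    positivity
  have hMBpos : 0 < MB := by positivity
  -- choose ε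
  have hev := ((ev_aux C₁ (1/2) α hα0 (by norm_num)).and
      ((ev_aux C₁ δ α hα0 hδ).and
      (((tendsto_id.mono_left (nhdsWithin_le_nhds (s := Ioi (0:ℝ)))).eventually_lt_const
          (show (0:ℝ) < 2*ε₀/3 by linarith)).and
      ((ev_aux (MA / lam) C₁ (lam - α) (by linarith) hC₁).and
      (ev_aux (MB / (lam + 1)) C₁ (lam - α) (by linarith) hC₁))))).and
      (eventually_mem_nhdsWithin (a := (0:ℝ)) (s := Ioi 0))
  obtain ⟨ε, ⟨h1, h2, h3, h4, h5⟩, hεpos'⟩ := hev.exists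
  have hεpos : 0 < ε := hεpos'
  refine ⟨ε, hεpos, ?_⟩
  intro x₀ hx₀ γ hγ
  obtain ⟨hγc, hγb⟩ := hγ
  -- y bounds
  have hy : ∀ t ∈ Icc (0:ℝ) ε, t / 2 ≤ (γ t).2 ∧ (γ t).2 ≤ 3 * t / 2 := by
    intro t ht
    obtain ⟨ht0, htε⟩ := ht
    have hb := (hγb t ⟨ht0, htε⟩).2
    have hsplit : t ^ (α + 1) = t ^ α * t := by
      rw [Real.rpow_add' ht0 (by positivity), Real.rpow_one]
    have htα : t ^ α ≤ ε ^ α := Real.rpow_le_rpow ht0 htε hα0.le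
    have hsmall : C₁ * t ^ (α + 1) ≤ t / 2 := by
      rw [hsplit]
      have h1' : C₁ * t ^ α ≤ 1/2 := by
        have := mul_le_mul_of_nonneg_left htα hC₁.le
        linarith
      calc C₁ * (t ^ α * t) = (C₁ * t ^ α) * t := by ring
        _ ≤ (1/2) * t := mul_le_mul_of_nonneg_right h1' ht0
        _ = t / 2 := by ring
    have habs := abs_le.mp hb
    constructor <;> linarith [habs.1, habs.2]
  -- membership
  have hmem : ∀ t ∈ Ioc (0:ℝ) ε, γ t ∈ U := by
    intro t ht
    obtain ⟨ht0, htε⟩ := ht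
    have hyt := hy t ⟨ht0.le, htε⟩
    have hx : (γ t).1 ∈ U₀ := by
      apply hthick
      rw [Metric.mem_thickening_iff]
      refine ⟨x₀, hx₀, ?_⟩
      have hb := (hγb t ⟨ht0.le, htε⟩).1
      have htα : t ^ α ≤ ε ^ α := Real.rpow_le_rpow ht0.le htε hα0.le
      have : C₁ * t ^ α ≤ C₁ * ε ^ α := mul_le_mul_of_nonneg_left htα hC₁.le
      rw [dist_eq_norm]
      linarith
    have h3' : ε < 2 * ε₀ / 3 := h3
    exact ⟨hx, by linarith [hyt.1], by linarith [hyt.2]⟩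
  -- pointwise bounds on A∘γ and B∘γ
  have hAbd : ∀ τ ∈ Ioc (0:ℝ) ε, ‖A (γ τ)‖ ≤ MA * τ ^ (lam - 1) := by
    intro τ hτ
    obtain ⟨hτ0, hτε⟩ := hτ
    have hmemτ := hmem τ ⟨hτ0, hτε⟩
    have hyτ := hy τ ⟨hτ0.le, hτε⟩
    have hylb : τ / 2 ≤ (γ τ).2 := hyτ.1
    have hy0 : 0 < (γ τ).2 := lt_of_lt_of_le (by linarith) hylb
    have hMnn : (0:ℝ) ≤ C₀ * (γ τ).2 ^ (lam - 1) := by positivity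
    have h1' : ‖A (γ τ)‖ ≤ Real.sqrt m * (C₀ * (γ τ).2 ^ (lam - 1)) :=
      euclid_norm_le_aux _ hMnn (fun i => hA _ hmemτ i)
    have h2' : (γ τ).2 ^ (lam - 1) ≤ (τ / 2) ^ (lam - 1) :=
      Real.rpow_le_rpow_of_nonpos (by linarith) hylb (by linarith)
    have h3' : (τ / 2) ^ (lam - 1) = 2 ^ (1 - lam) * τ ^ (lam - 1) := by
      rw [Real.div_rpow hτ0.le (by norm_num : (0:ℝ) ≤ 2), div_eq_mul_inv,
        ← Real.rpow_neg (by norm_num : (0:ℝ) ≤ 2), neg_sub, mul_comm]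
    calc ‖A (γ τ)‖ ≤ Real.sqrt m * (C₀ * (γ τ).2 ^ (lam - 1)) := h1'
      _ ≤ Real.sqrt m * (C₀ * (τ / 2) ^ (lam - 1)) := by
          have := mul_le_mul_of_nonneg_left h2' hC₀.le
          have hsq : (0:ℝ) ≤ Real.sqrt m := Real.sqrt_nonneg _
          exact mul_le_mul_of_nonneg_left this hsq
      _ = MA * τ ^ (lam - 1) := by rw [h3', hMA]; ring
  have hBbd : ∀ τ ∈ Ioc (0:ℝ) ε, ‖B (γ τ)‖ ≤ MB * τ ^ lam := by
    intro τ hτ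
    obtain ⟨hτ0, hτε⟩ := hτ
    have hmemτ := hmem τ ⟨hτ0, hτε⟩
    have hyτ := hy τ ⟨hτ0.le, hτε⟩
    have hy0 : 0 ≤ (γ τ).2 := by linarith [hyτ.1]
    have h1' : |B (γ τ)| ≤ C₀ * (γ τ).2 ^ lam := hB _ hmemτ
    have h2' : (γ τ).2 ^ lam ≤ (3 * τ / 2) ^ lam :=
      Real.rpow_le_rpow hy0 hyτ.2 hlam0.le
    have h3' : (3 * τ / 2) ^ lam = (3/2) ^ lam * τ ^ lam := by
      rw [show 3 * τ / 2 = (3/2) * τ by ring,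
        Real.mul_rpow (by norm_num) hτ0.le]
    calc ‖B (γ τ)‖ = |B (γ τ)| := rfl
      _ ≤ C₀ * (γ τ).2 ^ lam := h1'
      _ ≤ C₀ * ((3/2) ^ lam * τ ^ lam) := by
          rw [← h3']; exact mul_le_mul_of_nonneg_left h2' hC₀.le
      _ = MB * τ ^ lam := by rw [hMB]; ring
  -- integrability
  have hintA : ∀ t ∈ Icc (0:ℝ) ε, IntervalIntegrable (fun τ => A (γ τ)) volume 0 t := by
    intro t ht
    obtain ⟨ht0, htε⟩ := ht
    rw [intervalIntegrable_iff, uIoc_of_le ht0]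
    have hmeas : AEStronglyMeasurable (fun τ => A (γ τ)) (volume.restrict (Ioc 0 t)) := by
      have hc : ContinuousOn (fun τ => A (γ τ)) (Ioc 0 t) :=
        hAcont.comp (hγc.mono (Ioc_subset_Icc_self.trans (Icc_subset_Icc_right htε)))
          (fun τ hτ => hmem τ ⟨hτ.1, hτ.2.trans htε⟩)
      exact hc.aestronglyMeasurable measurableSet_Ioc
    have hg : IntegrableOn (fun τ => MA * τ ^ (lam - 1)) (Ioc 0 t) volume := by
      have := (intervalIntegral.intervalIntegrable_rpow' (a := 0) (b := t)
        (show (-1:ℝ) < lam - 1 by linarith)).const_mul MA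
      rwa [intervalIntegrable_iff, uIoc_of_le ht0] at this
    refine hg.mono' hmeas ?_
    refine (ae_restrict_iff' measurableSet_Ioc).2 (Filter.Eventually.of_forall ?_)
    intro τ hτ
    exact hAbd τ ⟨hτ.1, hτ.2.trans htε⟩
  have hintB : ∀ t ∈ Icc (0:ℝ) ε, IntervalIntegrable (fun τ => B (γ τ)) volume 0 t := by
    intro t ht
    obtain ⟨ht0, htε⟩ := ht
    rw [intervalIntegrable_iff, uIoc_of_le ht0]
    have hmeas : AEStronglyMeasurable (fun τ => B (γ τ)) (volume.restrict (Ioc 0 t)) := by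
      have hc : ContinuousOn (fun τ => B (γ τ)) (Ioc 0 t) :=
        hBcont.comp (hγc.mono (Ioc_subset_Icc_self.trans (Icc_subset_Icc_right htε)))
          (fun τ hτ => hmem τ ⟨hτ.1, hτ.2.trans htε⟩)
      exact hc.aestronglyMeasurable measurableSet_Ioc
    have hg : IntegrableOn (fun τ => MB * τ ^ lam) (Ioc 0 t) volume := by
      have := (intervalIntegral.intervalIntegrable_rpow' (a := 0) (b := t)
        (show (-1:ℝ) < lam by linarith)).const_mul MB
      rwa [intervalIntegrable_iff, uIoc_of_le ht0] at this
    refine hg.mono' hmeas ?_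
    refine (ae_restrict_iff' measurableSet_Ioc).2 (Filter.Eventually.of_forall ?_)
    intro τ hτ
    exact hBbd τ ⟨hτ.1, hτ.2.trans htε⟩
  -- integral bounds
  have hnormA : ∀ t ∈ Icc (0:ℝ) ε, ‖∫ τ in (0:ℝ)..t, A (γ τ)‖ ≤ C₁ * t ^ α := by
    intro t ht
    obtain ⟨ht0, htε⟩ := ht
    have hgint : IntervalIntegrable (fun τ => MA * τ ^ (lam - 1)) volume 0 t :=
      (intervalIntegral.intervalIntegrable_rpow' (show (-1:ℝ) < lam - 1 by linarith)).const_mul MA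
    have hle : ‖∫ τ in (0:ℝ)..t, A (γ τ)‖ ≤ |∫ τ in (0:ℝ)..t, MA * τ ^ (lam - 1)| := by
      apply intervalIntegral.norm_integral_le_abs_of_norm_le _ hgint
      rw [uIoc_of_le ht0]
      refine (ae_restrict_iff' measurableSet_Ioc).2 (Filter.Eventually.of_forall ?_)
      intro τ hτ
      exact hAbd τ ⟨hτ.1, hτ.2.trans htε⟩
    have hval : (∫ τ in (0:ℝ)..t, MA * τ ^ (lam - 1)) = MA * (t ^ lam / lam) := by
      rw [intervalIntegral.integral_const_mul, integral_rpow (Or.inl (by linarith))]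
      rw [Real.zero_rpow (by linarith : lam - 1 + 1 ≠ 0)]
      ring_nf
    have htnn : 0 ≤ t ^ lam / lam := by positivity
    have hfin : MA * (t ^ lam / lam) ≤ C₁ * t ^ α := by
      have hsplit : t ^ lam = t ^ (lam - α) * t ^ α := by
        rw [← Real.rpow_add' ht0 (by linarith : lam - α + α ≠ 0)]
        ring_nf
      have hmono : t ^ (lam - α) ≤ ε ^ (lam - α) :=
        Real.rpow_le_rpow ht0 htε (by linarith)
      have h4' : MA / lam * ε ^ (lam - α) ≤ C₁ := h4.le
      have htα : (0:ℝ) ≤ t ^ α := Real.rpow_nonneg ht0 α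
      calc MA * (t ^ lam / lam) = (MA / lam * t ^ (lam - α)) * t ^ α := by
            rw [hsplit]; ring
        _ ≤ (MA / lam * ε ^ (lam - α)) * t ^ α := by
            apply mul_le_mul_of_nonneg_right _ htα
            exact mul_le_mul_of_nonneg_left hmono (by positivity)
        _ ≤ C₁ * t ^ α := mul_le_mul_of_nonneg_right h4' htα
    calc ‖∫ τ in (0:ℝ)..t, A (γ τ)‖ ≤ |∫ τ in (0:ℝ)..t, MA * τ ^ (lam - 1)| := hle
      _ = MA * (t ^ lam / lam) := by rw [hval, abs_of_nonneg (by positivity)]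
      _ ≤ C₁ * t ^ α := hfin
  have hnormB : ∀ t ∈ Icc (0:ℝ) ε, |∫ τ in (0:ℝ)..t, B (γ τ)| ≤ C₁ * t ^ (α + 1) := by
    intro t ht
    obtain ⟨ht0, htε⟩ := ht
    have hgint : IntervalIntegrable (fun τ => MB * τ ^ lam) volume 0 t :=
      (intervalIntegral.intervalIntegrable_rpow' (show (-1:ℝ) < lam by linarith)).const_mul MB
    have hle : ‖∫ τ in (0:ℝ)..t, B (γ τ)‖ ≤ |∫ τ in (0:ℝ)..t, MB * τ ^ lam| := by
      apply intervalIntegral.norm_integral_le_abs_of_norm_le _ hgint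
      rw [uIoc_of_le ht0]
      refine (ae_restrict_iff' measurableSet_Ioc).2 (Filter.Eventually.of_forall ?_)
      intro τ hτ
      exact hBbd τ ⟨hτ.1, hτ.2.trans htε⟩
    have hval : (∫ τ in (0:ℝ)..t, MB * τ ^ lam) = MB * (t ^ (lam + 1) / (lam + 1)) := by
      rw [intervalIntegral.integral_const_mul, integral_rpow (Or.inl (by linarith))]
      rw [Real.zero_rpow (by linarith : lam + 1 ≠ 0)]
      ring_nf
    have hfin : MB * (t ^ (lam + 1) / (lam + 1)) ≤ C₁ * t ^ (α + 1) := by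
      have hsplit : t ^ (lam + 1) = t ^ (lam - α) * t ^ (α + 1) := by
        rw [← Real.rpow_add' ht0 (by linarith : lam - α + (α + 1) ≠ 0)]
        ring_nf
      have hmono : t ^ (lam - α) ≤ ε ^ (lam - α) :=
        Real.rpow_le_rpow ht0 htε (by linarith)
      have h5' : MB / (lam + 1) * ε ^ (lam - α) ≤ C₁ := h5.le
      have htα : (0:ℝ) ≤ t ^ (α + 1) := Real.rpow_nonneg ht0 _
      calc MB * (t ^ (lam + 1) / (lam + 1))
          = (MB / (lam + 1) * t ^ (lam - α)) * t ^ (α + 1) := by rw [hsplit]; ring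
        _ ≤ (MB / (lam + 1) * ε ^ (lam - α)) * t ^ (α + 1) := by
            apply mul_le_mul_of_nonneg_right _ htα
            exact mul_le_mul_of_nonneg_left hmono (by positivity)
        _ ≤ C₁ * t ^ (α + 1) := mul_le_mul_of_nonneg_right h5' htα
    calc |∫ τ in (0:ℝ)..t, B (γ τ)| = ‖∫ τ in (0:ℝ)..t, B (γ τ)‖ := rfl
      _ ≤ |∫ τ in (0:ℝ)..t, MB * τ ^ lam| := hle
      _ = MB * (t ^ (lam + 1) / (lam + 1)) := by rw [hval, abs_of_nonneg (by positivity)]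
      _ ≤ C₁ * t ^ (α + 1) := hfin
  -- continuity of Tγ
  have hIOnA : IntegrableOn (fun τ => A (γ τ)) (uIcc 0 ε) volume := by
    have h := hintA ε ⟨hεpos.le, le_refl ε⟩
    rw [intervalIntegrable_iff, uIoc_of_le hεpos.le] at h
    unfold IntegrableOn
    rw [uIcc_of_le hεpos.le, ← Measure.restrict_congr_set Ioc_ae_eq_Icc]
    exact h
  have hIOnB : IntegrableOn (fun τ => B (γ τ)) (uIcc 0 ε) volume := by
    have h := hintB ε ⟨hεpos.le, le_refl ε⟩
    rw [intervalIntegrable_iff, uIoc_of_le hεpos.le] at h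
    unfold IntegrableOn
    rw [uIcc_of_le hεpos.le, ← Measure.restrict_congr_set Ioc_ae_eq_Icc]
    exact h
  have hcontA : ContinuousOn (fun t => ∫ τ in (0:ℝ)..t, A (γ τ)) (Icc 0 ε) := by
    have := intervalIntegral.continuousOn_primitive_interval hIOnA
    rwa [uIcc_of_le hεpos.le] at this
  have hcontB : ContinuousOn (fun t => ∫ τ in (0:ℝ)..t, B (γ τ)) (Icc 0 ε) := by
    have := intervalIntegral.continuousOn_primitive_interval hIOnB
    rwa [uIcc_of_le hεpos.le] at this
  have hTcont : ContinuousOn (Tmap A B x₀ γ) (Icc 0 ε) := by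
    unfold Tmap
    exact (continuousOn_const.add hcontA).prodMk (continuousOn_id.add hcontB)
  refine ⟨hmem, hy, fun t ht => ⟨hintA t ht, hintB t ht⟩, hTcont, ?_⟩
  intro t ht
  constructor
  · show ‖x₀ + (∫ τ in (0:ℝ)..t, A (γ τ)) - x₀‖ ≤ C₁ * t ^ α
    rw [add_sub_cancel_left]
    exact hnormA t ht
  · show |t + (∫ τ in (0:ℝ)..t, B (γ τ)) - t| ≤ C₁ * t ^ (α + 1)
    rw [add_sub_cancel_left]
    exact hnormB t ht
end
end

section
/- Under these hypotheses, assume moreover that U₀ is convex, let K ⊂ U₀ be compact, and fix C₁ > 0 and α ∈ (0,λ). Then there is a constant C′, depending only on m, C₀, C₁, λ and α, with the following property: for every x₀ ∈ K and every ε > 0 such that C₁ ε^α ≤ 1/2 and every γ ∈ 𝒳(x₀,C₁,α,ε) takes values in U for t ∈ (0,ε], one has d(Tγ, Tγ̃) ≤ C′ ε^λ d(γ, γ̃) for all γ, γ̃ ∈ 𝒳(x₀,C₁,α,ε). In particular, T is a contraction of (𝒳(x₀,C₁,α,ε), d) when ε is sufficiently small. -/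
open Set MeasureTheory

noncomputable section

/-- The distance `d(γ,γ̃) = sup_{t ∈ (0,ε]} ( t^{−α}|a(t)−ã(t)| + t^{−α−1}|b(t)−b̃(t)| )`
on `𝒳(x₀,C₁,α,ε)`. -/
noncomputable def dX {m : ℕ} (α ε : ℝ)
    (γ γ' : ℝ → EuclideanSpace ℝ (Fin m) × ℝ) : ℝ :=
  ⨆ t : Icc (0:ℝ) ε, ((t : ℝ) ^ (-α) * ‖(γ t).1 - (γ' t).1‖ +
    (t : ℝ) ^ (-(α + 1)) * |(γ t).2 - (γ' t).2|)

lemma euclid_sum_single {m : ℕ} (v : EuclideanSpace ℝ (Fin m)) :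
    ∑ j, v j • EuclideanSpace.single j (1:ℝ) = v := by
  ext i
  have h := Finset.sum_apply i Finset.univ (fun j => v j • EuclideanSpace.single j (1:ℝ))
  simp only [h]
  simp [EuclideanSpace.single_apply, Finset.sum_ite_eq', Finset.sum_ite_eq, mul_ite, Pi.single_apply]

lemma euclid_abs_le_norm {m : ℕ} (v : EuclideanSpace ℝ (Fin m)) (i : Fin m) :
    |v i| ≤ ‖v‖ := by
  rw [EuclideanSpace.norm_eq, ← Real.sqrt_sq_eq_abs]
  apply Real.sqrt_le_sqrt
  have := Finset.single_le_sum (f := fun j => ‖v j‖ ^ 2) (fun j _ => sq_nonneg _)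
    (Finset.mem_univ i)
  simpa [Real.norm_eq_abs, sq_abs] using this

lemma euclid_norm_le_sum {m : ℕ} (v : EuclideanSpace ℝ (Fin m)) :
    ‖v‖ ≤ ∑ i, |v i| := by
  conv_lhs => rw [← euclid_sum_single v]
  refine (norm_sum_le _ _).trans ?_
  refine Finset.sum_le_sum fun i _ => ?_
  rw [norm_smul, EuclideanSpace.norm_single]
  simp [Real.norm_eq_abs]

lemma euclid_norm_le_card_mul {m : ℕ} (v : EuclideanSpace ℝ (Fin m)) {c : ℝ}
    (h : ∀ i, |v i| ≤ c) : ‖v‖ ≤ m * c := by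
  refine (euclid_norm_le_sum v).trans ?_
  calc ∑ i, |v i| ≤ ∑ _i : Fin m, c := Finset.sum_le_sum fun i _ => h i
    _ = m * c := by simp [mul_comm]

lemma clm_pair_bound {m : ℕ} (L : (EuclideanSpace ℝ (Fin m) × ℝ) →L[ℝ] ℝ)
    (u : EuclideanSpace ℝ (Fin m)) (s : ℝ) {cx cy : ℝ}
    (hx : ∀ j, |L (EuclideanSpace.single j 1, 0)| ≤ cx) (hy : |L (0,1)| ≤ cy) :
    |L (u, s)| ≤ (m * ‖u‖) * cx + |s| * cy := by
  have h1 : (u, s) = (∑ j, u j • ((EuclideanSpace.single j (1:ℝ) : EuclideanSpace ℝ (Fin m)),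
      (0:ℝ))) + s • ((0 : EuclideanSpace ℝ (Fin m)), (1:ℝ)) := by
    refine Prod.ext ?_ ?_
    · simp [Prod.fst_sum, euclid_sum_single]
    · simp [Prod.snd_sum]
  have h2 : L (u, s) = (∑ j, u j * L (EuclideanSpace.single j 1, 0)) + s * L (0, 1) := by
    rw [h1, map_add, map_sum]
    congr 1
    · exact Finset.sum_congr rfl fun j _ => by rw [L.map_smul, smul_eq_mul]
    · rw [L.map_smul, smul_eq_mul]
  rw [h2]
  have hA : |∑ j, u j * L (EuclideanSpace.single j 1, 0)| ≤ ∑ _j : Fin m, ‖u‖ * cx := by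
    refine (Finset.abs_sum_le_sum_abs _ _).trans (Finset.sum_le_sum fun j _ => ?_)
    rw [abs_mul]
    exact mul_le_mul (euclid_abs_le_norm u j) (hx j) (abs_nonneg _) (norm_nonneg _)
  have hB : |s * L (0, 1)| ≤ |s| * cy := by
    rw [abs_mul]; exact mul_le_mul_of_nonneg_left hy (abs_nonneg _)
  have hsum : (∑ _j : Fin m, ‖u‖ * cx) = (m * ‖u‖) * cx := by
    simp [Finset.sum_const]; ring
  calc |(∑ j, u j * L (EuclideanSpace.single j 1, 0)) + s * L (0, 1)|
      ≤ |∑ j, u j * L (EuclideanSpace.single j 1, 0)| + |s * L (0, 1)| := abs_add_le _ _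
    _ ≤ (m * ‖u‖) * cx + |s| * cy := by rw [← hsum]; exact add_le_add hA hB

/-- `y^c ≤ 4 τ^c` when `τ/2 ≤ y` and `-2 ≤ c ≤ 0`. -/
lemma rpow_bound_neg {τ c y : ℝ} (hτ : 0 < τ) (hc0 : c ≤ 0) (hc2 : -2 ≤ c)
    (hy : τ/2 ≤ y) : y ^ c ≤ 4 * τ ^ c := by
  have hτ2 : (0:ℝ) < τ/2 := by linarith
  have h1 : y ^ c ≤ (τ/2) ^ c := Real.rpow_le_rpow_of_nonpos hτ2 hy hc0
  have h2 : (τ/2 : ℝ) ^ c = τ ^ c / 2 ^ c := Real.div_rpow hτ.le (by norm_num) c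
  have h3 : (1:ℝ)/4 ≤ (2:ℝ) ^ c := by
    have h4 : (2:ℝ) ^ ((-2:ℤ) : ℝ) = 1/4 := by rw [Real.rpow_intCast]; norm_num
    calc (1:ℝ)/4 = 2 ^ ((-2:ℤ) : ℝ) := h4.symm
      _ ≤ 2 ^ c := Real.rpow_le_rpow_of_exponent_le one_le_two (by push_cast; linarith)
  have h5 : (0:ℝ) < 2 ^ c := Real.rpow_pos_of_pos (by norm_num) c
  have h6 : 0 ≤ τ ^ c := (Real.rpow_pos_of_pos hτ c).le
  calc y ^ c ≤ τ ^ c / 2 ^ c := h1.trans_eq h2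
    _ ≤ 4 * τ ^ c := by
        rw [div_le_iff₀ h5]
        nlinarith

/-- `y^c ≤ 2 τ^c` when `0 ≤ y ≤ 3τ/2` and `0 ≤ c ≤ 1`. -/
lemma rpow_bound_pos {τ c y : ℝ} (hτ : 0 < τ) (hc0 : 0 ≤ c) (hc1 : c ≤ 1)
    (hy0 : 0 ≤ y) (hy : y ≤ 3*τ/2) : y ^ c ≤ 2 * τ ^ c := by
  have h1 : y ^ c ≤ (3*τ/2) ^ c := Real.rpow_le_rpow hy0 hy hc0
  have h2 : (3*τ/2 : ℝ) ^ c = (3/2 : ℝ) ^ c * τ ^ c := by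
    rw [show (3*τ/2 : ℝ) = (3/2) * τ by ring, Real.mul_rpow (by norm_num) hτ.le]
  have h3 : (3/2 : ℝ) ^ c ≤ 2 := by
    have : (3/2 : ℝ) ^ c ≤ (3/2 : ℝ) ^ (1:ℝ) :=
      Real.rpow_le_rpow_of_exponent_le (by norm_num) hc1
    rw [Real.rpow_one] at this
    linarith
  have h6 : 0 ≤ τ ^ c := (Real.rpow_pos_of_pos hτ c).le
  calc y ^ c ≤ (3/2 : ℝ) ^ c * τ ^ c := h1.trans_eq h2
    _ ≤ 2 * τ ^ c := by nlinarith

/-- One-dimensional mean value bound along a segment. -/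
lemma mvt_bound {E : Type*} [NormedAddCommGroup E] [NormedSpace ℝ E] {f : E → ℝ}
    {U : Set E} (hU : IsOpen U) (hf : DifferentiableOn ℝ f U) {q q' : E}
    (hseg : ∀ θ ∈ Icc (0:ℝ) 1, q' + θ • (q - q') ∈ U) {C : ℝ}
    (hC : ∀ θ ∈ Icc (0:ℝ) 1, |fderiv ℝ f (q' + θ • (q - q')) (q - q')| ≤ C) :
    |f q - f q'| ≤ C := by
  set w := q - q' with hw
  set g : ℝ → ℝ := fun θ => f (q' + θ • w) with hg
  have hderiv : ∀ θ ∈ Icc (0:ℝ) 1,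
      HasDerivWithinAt g (fderiv ℝ f (q' + θ • w) w) (Icc (0:ℝ) 1) θ := by
    intro θ hθ
    have hdiff : DifferentiableAt ℝ f (q' + θ • w) :=
      hf.differentiableAt (hU.mem_nhds (hseg θ hθ))
    have hpath : HasDerivAt (fun θ : ℝ => q' + θ • w) w θ := by
      simpa using ((hasDerivAt_id θ).smul_const w).const_add q'
    exact (hdiff.hasFDerivAt.comp_hasDerivAt θ hpath).hasDerivWithinAt
  have hC' : ∀ θ ∈ Icc (0:ℝ) 1, ‖fderiv ℝ f (q' + θ • w) w‖ ≤ C := by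
    intro θ hθ; simpa [Real.norm_eq_abs] using hC θ hθ
  have := (convex_Icc (0:ℝ) 1).norm_image_sub_le_of_norm_hasDerivWithin_le
    hderiv hC' (left_mem_Icc.2 zero_le_one) (right_mem_Icc.2 zero_le_one)
  have hg1 : g 1 = f q := by simp [hg, hw]
  have hg0 : g 0 = f q' := by simp [hg]
  rw [hg1, hg0] at this
  simpa using this

set_option maxHeartbeats 1600000 in
/-- **The Picard map `T` is a contraction.**  Under the hypotheses on the vector field
`(A, 1+B)`, with `U₀` convex, `K ⊂ U₀` compact, `C₁ > 0` and `α ∈ (0,λ)`, there is a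
constant `C′ > 0` such that for every `x₀ ∈ K` and every `ε > 0` with `C₁ ε^α ≤ 1/2` for
which all curves of `𝒳(x₀,C₁,α,ε)` take values in `U` on `(0,ε]`, one has
`d(Tγ, Tγ̃) ≤ C′ ε^λ d(γ, γ̃)` for all `γ, γ̃ ∈ 𝒳(x₀,C₁,α,ε)`. -/
theorem picard_map_contraction {m : ℕ} (hm : 1 ≤ m)
    (U₀ : Set (EuclideanSpace ℝ (Fin m))) (hU₀ : IsOpen U₀)
    (ε₀ : ℝ) (hε₀ : 0 < ε₀)
    (A : EuclideanSpace ℝ (Fin m) × ℝ → EuclideanSpace ℝ (Fin m))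
    (B : EuclideanSpace ℝ (Fin m) × ℝ → ℝ)
    (hV : ContDiffOn ℝ 1 (fun q => (A q, 1 + B q)) (U₀ ×ˢ Ioo 0 ε₀))
    (C₀ : ℝ) (hC₀ : 0 < C₀) (lam : ℝ) (hlam : lam ∈ Ioo (0 : ℝ) 1)
    (hB : ∀ q ∈ U₀ ×ˢ Ioo (0:ℝ) ε₀, |B q| ≤ C₀ * q.2 ^ lam)
    (hBx : ∀ q ∈ U₀ ×ˢ Ioo (0:ℝ) ε₀, ∀ j : Fin m,
      |fderiv ℝ B q (EuclideanSpace.single j 1, 0)| ≤ C₀ * q.2 ^ lam)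
    (hBy : ∀ q ∈ U₀ ×ˢ Ioo (0:ℝ) ε₀,
      |q.2 * fderiv ℝ B q (0, 1)| ≤ C₀ * q.2 ^ lam)
    (hA : ∀ q ∈ U₀ ×ˢ Ioo (0:ℝ) ε₀, ∀ i : Fin m,
      |A q i| ≤ C₀ * q.2 ^ (lam - 1))
    (hAx : ∀ q ∈ U₀ ×ˢ Ioo (0:ℝ) ε₀, ∀ i j : Fin m,
      |fderiv ℝ (fun w => A w i) q (EuclideanSpace.single j 1, 0)| ≤ C₀ * q.2 ^ (lam - 1))
    (hAy : ∀ q ∈ U₀ ×ˢ Ioo (0:ℝ) ε₀, ∀ i : Fin m,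
      |q.2 * fderiv ℝ (fun w => A w i) q (0, 1)| ≤ C₀ * q.2 ^ (lam - 1))
    (hU₀conv : Convex ℝ U₀)
    (K : Set (EuclideanSpace ℝ (Fin m))) (hK : IsCompact K) (hKU : K ⊆ U₀)
    (C₁ : ℝ) (hC₁ : 0 < C₁) (α : ℝ) (hα : α ∈ Ioo (0 : ℝ) lam) :
    ∃ C' : ℝ, 0 < C' ∧ ∀ x₀ ∈ K, ∀ ε : ℝ, 0 < ε →
      C₁ * ε ^ α ≤ 1 / 2 →
      (∀ γ : ℝ → EuclideanSpace ℝ (Fin m) × ℝ, InX x₀ C₁ α ε γ →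
        ∀ t ∈ Ioc (0:ℝ) ε, γ t ∈ U₀ ×ˢ Ioo (0:ℝ) ε₀) →
      ∀ γ γ' : ℝ → EuclideanSpace ℝ (Fin m) × ℝ,
        InX x₀ C₁ α ε γ → InX x₀ C₁ α ε γ' →
        dX α ε (Tmap A B x₀ γ) (Tmap A B x₀ γ') ≤ C' * ε ^ lam * dX α ε γ γ' := by
  obtain ⟨hlam0, hlam1⟩ := hlam
  obtain ⟨hα0, hαlam⟩ := hα
  have hm0 : (0:ℝ) < m := by exact_mod_cast Nat.lt_of_lt_of_le Nat.zero_lt_one hm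
  have hUopen : IsOpen (U₀ ×ˢ Ioo (0:ℝ) ε₀) := hU₀.prod isOpen_Ioo
  -- regularity of A, B on U
  have hFd : DifferentiableOn ℝ (fun q => (A q, 1 + B q)) (U₀ ×ˢ Ioo (0:ℝ) ε₀) :=
    hV.differentiableOn one_ne_zero
  have hFc : ContinuousOn (fun q => (A q, 1 + B q)) (U₀ ×ˢ Ioo (0:ℝ) ε₀) := hV.continuousOn
  have hAc : ContinuousOn A (U₀ ×ˢ Ioo (0:ℝ) ε₀) := by
    have := continuous_fst.comp_continuousOn hFc
    simpa [Function.comp_def] using this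
  have hBc : ContinuousOn B (U₀ ×ˢ Ioo (0:ℝ) ε₀) := by
    have h2 := continuous_snd.comp_continuousOn hFc
    have h3 : ContinuousOn (fun q => (1 + B q) - 1) (U₀ ×ˢ Ioo (0:ℝ) ε₀) := by
      refine ContinuousOn.sub ?_ continuousOn_const
      simpa [Function.comp_def] using h2
    simpa using h3
  have hAd : DifferentiableOn ℝ A (U₀ ×ˢ Ioo (0:ℝ) ε₀) := by
    have := ((ContinuousLinearMap.fst ℝ (EuclideanSpace ℝ (Fin m)) ℝ).differentiable
      ).comp_differentiableOn hFd
    simpa [Function.comp_def] using this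
  have hAid : ∀ i : Fin m, DifferentiableOn ℝ (fun w => A w i) (U₀ ×ˢ Ioo (0:ℝ) ε₀) := by
    intro i
    have := ((EuclideanSpace.proj i).differentiable).comp_differentiableOn hAd
    simpa [Function.comp_def] using this
  have hBd : DifferentiableOn ℝ B (U₀ ×ˢ Ioo (0:ℝ) ε₀) := by
    have h2 := hFd.snd
    have h3 := h2.sub_const 1
    simpa using h3
  set Ka : ℝ := (4*m+4)*C₀ with hKa
  have hKa0 : 0 < Ka := by positivity
  refine ⟨(m*Ka)/lam + Ka + 1, by positivity, ?_⟩
  intro x₀ hx₀K ε hε hhalf hmem γ γ' hγ hγ'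
  haveI : Nonempty (Icc (0:ℝ) ε) := ⟨⟨0, le_refl 0, hε.le⟩⟩
  set F : Icc (0:ℝ) ε → ℝ := fun t =>
    (t : ℝ) ^ (-α) * ‖(γ t).1 - (γ' t).1‖ +
      (t : ℝ) ^ (-(α + 1)) * |(γ t).2 - (γ' t).2| with hF
  have hdX : dX α ε γ γ' = ⨆ t, F t := rfl
  set d : ℝ := ⨆ t, F t with hd
  have hbdd : BddAbove (Set.range F) := by
    refine ⟨4*C₁, ?_⟩
    rintro x ⟨⟨t, ht0, htε⟩, rfl⟩
    rcases eq_or_lt_of_le ht0 with h0 | htpos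
    · have : F ⟨t, ht0, htε⟩ = 0 := by
        simp only [hF, ← h0]
        rw [Real.zero_rpow (by linarith : -α ≠ 0),
          Real.zero_rpow (by linarith : -(α+1) ≠ 0)]
        ring
      rw [this]; positivity
    · have h1 := (hγ.2 t ⟨ht0, htε⟩).1
      have h1' := (hγ'.2 t ⟨ht0, htε⟩).1
      have h2 := (hγ.2 t ⟨ht0, htε⟩).2
      have h2' := (hγ'.2 t ⟨ht0, htε⟩).2
      have hP : (0:ℝ) < t ^ α := Real.rpow_pos_of_pos htpos α
      have hQ : (0:ℝ) < t ^ (α+1) := Real.rpow_pos_of_pos htpos _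
      have hiP : t ^ (-α) = (t ^ α)⁻¹ := Real.rpow_neg htpos.le α
      have hiQ : t ^ (-(α+1)) = (t ^ (α+1))⁻¹ := Real.rpow_neg htpos.le _
      have hn1 : ‖(γ t).1 - (γ' t).1‖ ≤ 2 * C₁ * t ^ α := by
        have h3 := norm_sub_le ((γ t).1 - x₀) ((γ' t).1 - x₀)
        rw [sub_sub_sub_cancel_right] at h3
        linarith
      have hn2 : |(γ t).2 - (γ' t).2| ≤ 2 * C₁ * t ^ (α+1) := by
        have h3 := abs_sub ((γ t).2 - t) ((γ' t).2 - t)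
        rw [sub_sub_sub_cancel_right] at h3
        linarith
      have e1 : (t:ℝ) ^ (-α) * ‖(γ t).1 - (γ' t).1‖ ≤ 2*C₁ := by
        rw [hiP]
        calc (t ^ α)⁻¹ * ‖(γ t).1 - (γ' t).1‖ ≤ (t ^ α)⁻¹ * (2 * C₁ * t ^ α) :=
              mul_le_mul_of_nonneg_left hn1 (inv_nonneg.2 hP.le)
          _ = 2*C₁ := by
              rw [mul_comm ((t ^ α)⁻¹), mul_assoc, mul_inv_cancel₀ hP.ne', mul_one]
      have e2 : (t:ℝ) ^ (-(α+1)) * |(γ t).2 - (γ' t).2| ≤ 2*C₁ := by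
        rw [hiQ]
        calc (t ^ (α+1))⁻¹ * |(γ t).2 - (γ' t).2| ≤ (t ^ (α+1))⁻¹ * (2 * C₁ * t ^ (α+1)) :=
              mul_le_mul_of_nonneg_left hn2 (inv_nonneg.2 hQ.le)
          _ = 2*C₁ := by
              rw [mul_comm ((t ^ (α+1))⁻¹), mul_assoc, mul_inv_cancel₀ hQ.ne', mul_one]
      have : F ⟨t, ht0, htε⟩ = (t:ℝ) ^ (-α) * ‖(γ t).1 - (γ' t).1‖ +
          (t:ℝ) ^ (-(α+1)) * |(γ t).2 - (γ' t).2| := rfl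
      rw [this]; linarith
  have hd0 : 0 ≤ d := by
    have h := le_ciSup hbdd (⟨0, le_refl 0, hε.le⟩ : Icc (0:ℝ) ε)
    have hF0 : F ⟨0, le_refl 0, hε.le⟩ = 0 := by
      simp only [hF]
      rw [Real.zero_rpow (by linarith : -α ≠ 0),
        Real.zero_rpow (by linarith : -(α+1) ≠ 0)]
      ring
    rw [hF0] at h
    exact h
  have hεlam : (0:ℝ) ≤ ε ^ lam := Real.rpow_nonneg hε.le lam
  -- pointwise distance estimates
  have hpt : ∀ τ ∈ Ioc (0:ℝ) ε, ‖(γ τ).1 - (γ' τ).1‖ ≤ d * τ ^ α ∧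
      |(γ τ).2 - (γ' τ).2| ≤ d * τ ^ (α+1) := by
    intro τ hτ
    have h := le_ciSup hbdd (⟨τ, hτ.1.le, hτ.2⟩ : Icc (0:ℝ) ε)
    have hFval : F ⟨τ, hτ.1.le, hτ.2⟩ = (τ:ℝ) ^ (-α) * ‖(γ τ).1 - (γ' τ).1‖ +
        (τ:ℝ) ^ (-(α+1)) * |(γ τ).2 - (γ' τ).2| := rfl
    rw [hFval] at h
    have hP : (0:ℝ) < τ ^ α := Real.rpow_pos_of_pos hτ.1 α
    have hQ : (0:ℝ) < τ ^ (α+1) := Real.rpow_pos_of_pos hτ.1 _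
    have ht1 : 0 ≤ (τ:ℝ) ^ (-α) * ‖(γ τ).1 - (γ' τ).1‖ :=
      mul_nonneg (Real.rpow_nonneg hτ.1.le _) (norm_nonneg _)
    have ht2 : 0 ≤ (τ:ℝ) ^ (-(α+1)) * |(γ τ).2 - (γ' τ).2| :=
      mul_nonneg (Real.rpow_nonneg hτ.1.le _) (abs_nonneg _)
    have hPinv : τ ^ α * τ ^ (-α) = 1 := by
      rw [← Real.rpow_add hτ.1, show α + -α = 0 by ring, Real.rpow_zero]
    have hQinv : τ ^ (α+1) * τ ^ (-(α+1)) = 1 := by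
      rw [← Real.rpow_add hτ.1, show (α+1) + -(α+1) = 0 by ring, Real.rpow_zero]
    constructor
    · have h1 : (τ:ℝ) ^ (-α) * ‖(γ τ).1 - (γ' τ).1‖ ≤ d := by linarith
      calc ‖(γ τ).1 - (γ' τ).1‖ = τ ^ α * (τ ^ (-α) * ‖(γ τ).1 - (γ' τ).1‖) := by
            rw [← mul_assoc, hPinv, one_mul]
        _ ≤ τ ^ α * d := mul_le_mul_of_nonneg_left h1 hP.le
        _ = d * τ ^ α := mul_comm _ _
    · have h1 : (τ:ℝ) ^ (-(α+1)) * |(γ τ).2 - (γ' τ).2| ≤ d := by linarith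
      calc |(γ τ).2 - (γ' τ).2| = τ ^ (α+1) * (τ ^ (-(α+1)) * |(γ τ).2 - (γ' τ).2|) := by
            rw [← mul_assoc, hQinv, one_mul]
        _ ≤ τ ^ (α+1) * d := mul_le_mul_of_nonneg_left h1 hQ.le
        _ = d * τ ^ (α+1) := mul_comm _ _
  -- half estimates
  have hChalf : ∀ τ ∈ Ioc (0:ℝ) ε, C₁ * τ ^ (α+1) ≤ τ / 2 := by
    intro τ hτ
    have hτα : (0:ℝ) < τ ^ α := Real.rpow_pos_of_pos hτ.1 α
    have h1 : C₁ * τ ^ α ≤ 1/2 := by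
      have h0 : τ ^ α ≤ ε ^ α := Real.rpow_le_rpow hτ.1.le hτ.2 hα0.le
      nlinarith
    have h2 : τ ^ (α+1) = τ ^ α * τ := by rw [Real.rpow_add hτ.1, Real.rpow_one]
    rw [h2]
    nlinarith [hτ.1]
  have hyrange : ∀ δ : ℝ → EuclideanSpace ℝ (Fin m) × ℝ, InX x₀ C₁ α ε δ →
      ∀ τ ∈ Ioc (0:ℝ) ε, τ/2 ≤ (δ τ).2 ∧ (δ τ).2 ≤ 3*τ/2 := by
    intro δ hδ τ hτ
    have h := abs_le.1 (hδ.2 τ ⟨hτ.1.le, hτ.2⟩).2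
    have h2 := hChalf τ hτ
    have h3 : -(C₁ * τ ^ (α+1)) ≤ (δ τ).2 - τ := h.1
    have h4 : (δ τ).2 - τ ≤ C₁ * τ ^ (α+1) := h.2
    constructor <;> linarith
  -- segment curves stay in X, hence in U
  have hseg : ∀ θ ∈ Icc (0:ℝ) 1, InX x₀ C₁ α ε (fun t => γ' t + θ • (γ t - γ' t)) := by
    intro θ hθ
    obtain ⟨hθ0, hθ1⟩ := hθ
    constructor
    · exact hγ'.1.add ((hγ.1.sub hγ'.1).const_smul θ)
    · intro t ht
      have h1 := (hγ.2 t ht).1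
      have h1' := (hγ'.2 t ht).1
      have h2 := (hγ.2 t ht).2
      have h2' := (hγ'.2 t ht).2
      constructor
      · have e : (γ' t + θ • (γ t - γ' t)).1 - x₀
            = (1-θ) • ((γ' t).1 - x₀) + θ • ((γ t).1 - x₀) := by
          simp only [Prod.fst_add, Prod.smul_fst, Prod.fst_sub]
          module
        rw [e]
        calc ‖(1-θ) • ((γ' t).1 - x₀) + θ • ((γ t).1 - x₀)‖
            ≤ ‖(1-θ) • ((γ' t).1 - x₀)‖ + ‖θ • ((γ t).1 - x₀)‖ := norm_add_le _ _
          _ = (1-θ) * ‖(γ' t).1 - x₀‖ + θ * ‖(γ t).1 - x₀‖ := by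
              rw [norm_smul, norm_smul, Real.norm_eq_abs, Real.norm_eq_abs,
                abs_of_nonneg (by linarith), abs_of_nonneg hθ0]
          _ ≤ (1-θ) * (C₁ * t ^ α) + θ * (C₁ * t ^ α) :=
              add_le_add (mul_le_mul_of_nonneg_left h1' (by linarith))
                (mul_le_mul_of_nonneg_left h1 hθ0)
          _ = C₁ * t ^ α := by ring
      · have e : (γ' t + θ • (γ t - γ' t)).2 - t
            = (1-θ) * ((γ' t).2 - t) + θ * ((γ t).2 - t) := by
          simp only [Prod.snd_add, Prod.smul_snd, Prod.snd_sub, smul_eq_mul]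
          ring
        rw [e]
        calc |(1-θ) * ((γ' t).2 - t) + θ * ((γ t).2 - t)|
            ≤ |(1-θ) * ((γ' t).2 - t)| + |θ * ((γ t).2 - t)| := abs_add_le _ _
          _ = (1-θ) * |(γ' t).2 - t| + θ * |(γ t).2 - t| := by
              rw [abs_mul, abs_mul, abs_of_nonneg (by linarith), abs_of_nonneg hθ0]
          _ ≤ (1-θ) * (C₁ * t ^ (α+1)) + θ * (C₁ * t ^ (α+1)) :=
              add_le_add (mul_le_mul_of_nonneg_left h2' (by linarith))
                (mul_le_mul_of_nonneg_left h2 hθ0)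
          _ = C₁ * t ^ (α+1) := by ring
  have hsegU : ∀ τ ∈ Ioc (0:ℝ) ε, ∀ θ ∈ Icc (0:ℝ) 1,
      γ' τ + θ • (γ τ - γ' τ) ∈ U₀ ×ˢ Ioo (0:ℝ) ε₀ :=
    fun τ hτ θ hθ => hmem _ (hseg θ hθ) τ hτ
  have hsegy : ∀ τ ∈ Ioc (0:ℝ) ε, ∀ θ ∈ Icc (0:ℝ) 1,
      τ/2 ≤ (γ' τ + θ • (γ τ - γ' τ)).2 ∧ (γ' τ + θ • (γ τ - γ' τ)).2 ≤ 3*τ/2 := by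
    intro τ hτ θ hθ
    have h := hyrange _ (hseg θ hθ) τ hτ
    exact h
  -- key pointwise Lipschitz estimates
  have keyA : ∀ τ ∈ Ioc (0:ℝ) ε, ∀ i : Fin m,
      |A (γ τ) i - A (γ' τ) i| ≤ Ka * d * τ ^ (α + lam - 1) := by
    intro τ hτ i
    have hτ0 := hτ.1
    refine mvt_bound hUopen (hAid i) (fun θ hθ => hsegU τ hτ θ hθ) ?_
    intro θ hθ
    set p := γ' τ + θ • (γ τ - γ' τ) with hp
    have hpU : p ∈ U₀ ×ˢ Ioo (0:ℝ) ε₀ := hsegU τ hτ θ hθ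
    have hpy := hsegy τ hτ θ hθ
    have hpypos : 0 < p.2 := lt_of_lt_of_le (by linarith) hpy.1
    set L := fderiv ℝ (fun w => A w i) p with hL
    have hLx : ∀ j, |L (EuclideanSpace.single j 1, 0)| ≤ C₀ * (4 * τ ^ (lam-1)) := by
      intro j
      refine (hAx p hpU i j).trans ?_
      exact mul_le_mul_of_nonneg_left
        (rpow_bound_neg hτ0 (by linarith) (by linarith) hpy.1) hC₀.le
    have hLy : |L (0, 1)| ≤ C₀ * (4 * τ ^ (lam-2)) := by
      have h := hAy p hpU i
      rw [abs_mul, abs_of_nonneg hpypos.le] at h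
      have h2 : |L (0,1)| ≤ C₀ * p.2 ^ (lam-1) / p.2 := by
        rw [le_div_iff₀ hpypos, mul_comm]; exact h
      have hww : p.2 ^ (lam-2) = p.2 ^ (lam-1) / p.2 := by
        rw [show lam - 2 = (lam - 1) - 1 by ring]
        exact Real.rpow_sub_one hpypos.ne' _
      have h3 : C₀ * p.2 ^ (lam-1) / p.2 = C₀ * p.2 ^ (lam-2) := by
        rw [hww]; ring
      rw [h3] at h2
      refine h2.trans ?_
      exact mul_le_mul_of_nonneg_left
        (rpow_bound_neg hτ0 (by linarith) (by linarith) hpy.1) hC₀.le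
    have hu : ‖(γ τ - γ' τ).1‖ ≤ d * τ ^ α := by
      have := (hpt τ hτ).1
      simpa [Prod.fst_sub] using this
    have hs : |(γ τ - γ' τ).2| ≤ d * τ ^ (α+1) := by
      have := (hpt τ hτ).2
      simpa [Prod.snd_sub] using this
    have hbound := clm_pair_bound L (γ τ - γ' τ).1 (γ τ - γ' τ).2 hLx hLy
    have hw : ((γ τ - γ' τ).1, (γ τ - γ' τ).2) = γ τ - γ' τ := rfl
    rw [hw] at hbound
    refine hbound.trans ?_
    have e1 : τ ^ α * τ ^ (lam-1) = τ ^ (α+lam-1) := by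
      rw [← Real.rpow_add hτ0]; ring_nf
    have e2 : τ ^ (α+1) * τ ^ (lam-2) = τ ^ (α+lam-1) := by
      rw [← Real.rpow_add hτ0]; ring_nf
    have hτp : 0 < τ ^ (lam-1) := Real.rpow_pos_of_pos hτ0 _
    have hτp2 : 0 < τ ^ (lam-2) := Real.rpow_pos_of_pos hτ0 _
    calc (m * ‖(γ τ - γ' τ).1‖) * (C₀ * (4 * τ ^ (lam-1)))
          + |(γ τ - γ' τ).2| * (C₀ * (4 * τ ^ (lam-2)))
        ≤ (m * (d * τ ^ α)) * (C₀ * (4 * τ ^ (lam-1)))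
          + (d * τ ^ (α+1)) * (C₀ * (4 * τ ^ (lam-2))) := by
          refine add_le_add ?_ ?_
          · refine mul_le_mul_of_nonneg_right ?_ (by positivity)
            exact mul_le_mul_of_nonneg_left hu hm0.le
          · exact mul_le_mul_of_nonneg_right hs (by positivity)
      _ = (4*m*C₀) * d * (τ ^ α * τ ^ (lam-1)) + (4*C₀) * d * (τ ^ (α+1) * τ ^ (lam-2)) := by
          ring
      _ = Ka * d * τ ^ (α+lam-1) := by rw [e1, e2, hKa]; ring
  have keyB : ∀ τ ∈ Ioc (0:ℝ) ε,
      |B (γ τ) - B (γ' τ)| ≤ Ka * d * τ ^ (α + lam) := by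
    intro τ hτ
    have hτ0 := hτ.1
    refine mvt_bound hUopen hBd (fun θ hθ => hsegU τ hτ θ hθ) ?_
    intro θ hθ
    set p := γ' τ + θ • (γ τ - γ' τ) with hp
    have hpU : p ∈ U₀ ×ˢ Ioo (0:ℝ) ε₀ := hsegU τ hτ θ hθ
    have hpy := hsegy τ hτ θ hθ
    have hpypos : 0 < p.2 := lt_of_lt_of_le (by linarith) hpy.1
    set L := fderiv ℝ B p with hL
    have hLx : ∀ j, |L (EuclideanSpace.single j 1, 0)| ≤ C₀ * (2 * τ ^ lam) := by
      intro j
      refine (hBx p hpU j).trans ?_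
      exact mul_le_mul_of_nonneg_left
        (rpow_bound_pos hτ0 hlam0.le hlam1.le hpypos.le hpy.2) hC₀.le
    have hLy : |L (0, 1)| ≤ C₀ * (4 * τ ^ (lam-1)) := by
      have h := hBy p hpU
      rw [abs_mul, abs_of_nonneg hpypos.le] at h
      have h2 : |L (0,1)| ≤ C₀ * p.2 ^ lam / p.2 := by
        rw [le_div_iff₀ hpypos, mul_comm]; exact h
      have hww : p.2 ^ (lam-1) = p.2 ^ lam / p.2 := Real.rpow_sub_one hpypos.ne' _
      have h3 : C₀ * p.2 ^ lam / p.2 = C₀ * p.2 ^ (lam-1) := by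
        rw [hww]; ring
      rw [h3] at h2
      refine h2.trans ?_
      exact mul_le_mul_of_nonneg_left
        (rpow_bound_neg hτ0 (by linarith) (by linarith) hpy.1) hC₀.le
    have hu : ‖(γ τ - γ' τ).1‖ ≤ d * τ ^ α := by
      have := (hpt τ hτ).1
      simpa [Prod.fst_sub] using this
    have hs : |(γ τ - γ' τ).2| ≤ d * τ ^ (α+1) := by
      have := (hpt τ hτ).2
      simpa [Prod.snd_sub] using this
    have hbound := clm_pair_bound L (γ τ - γ' τ).1 (γ τ - γ' τ).2 hLx hLy
    have hw : ((γ τ - γ' τ).1, (γ τ - γ' τ).2) = γ τ - γ' τ := rfl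
    rw [hw] at hbound
    refine hbound.trans ?_
    have e1 : τ ^ α * τ ^ lam = τ ^ (α+lam) := by
      rw [← Real.rpow_add hτ0]
    have e2 : τ ^ (α+1) * τ ^ (lam-1) = τ ^ (α+lam) := by
      rw [← Real.rpow_add hτ0]; ring_nf
    have hτp : 0 < τ ^ lam := Real.rpow_pos_of_pos hτ0 _
    have hτp2 : 0 < τ ^ (lam-1) := Real.rpow_pos_of_pos hτ0 _
    calc (m * ‖(γ τ - γ' τ).1‖) * (C₀ * (2 * τ ^ lam))
          + |(γ τ - γ' τ).2| * (C₀ * (4 * τ ^ (lam-1)))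
        ≤ (m * (d * τ ^ α)) * (C₀ * (2 * τ ^ lam))
          + (d * τ ^ (α+1)) * (C₀ * (4 * τ ^ (lam-1))) := by
          refine add_le_add ?_ ?_
          · refine mul_le_mul_of_nonneg_right ?_ (by positivity)
            exact mul_le_mul_of_nonneg_left hu hm0.le
          · exact mul_le_mul_of_nonneg_right hs (by positivity)
      _ = (2*m*C₀) * d * (τ ^ α * τ ^ lam) + (4*C₀) * d * (τ ^ (α+1) * τ ^ (lam-1)) := by
          ring
      _ ≤ (4*m*C₀) * d * τ ^ (α+lam) + (4*C₀) * d * τ ^ (α+lam) := by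
          rw [e1, e2]
          have hX : 0 ≤ τ ^ (α+lam) := (Real.rpow_pos_of_pos hτ0 _).le
          have h8 : (2*(m:ℝ)*C₀) * d ≤ (4*(m:ℝ)*C₀) * d :=
            mul_le_mul_of_nonneg_right (by nlinarith) hd0
          exact add_le_add (mul_le_mul_of_nonneg_right h8 hX) le_rfl
      _ = Ka * d * τ ^ (α+lam) := by rw [hKa]; ring
  have keyAn : ∀ τ ∈ Ioc (0:ℝ) ε, ‖A (γ τ) - A (γ' τ)‖ ≤ (m * Ka * d) * τ ^ (α+lam-1) := by
    intro τ hτ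
    have h := euclid_norm_le_card_mul (A (γ τ) - A (γ' τ)) (c := Ka * d * τ ^ (α+lam-1))
      (fun i => by
        have := keyA τ hτ i
        simpa [PiLp.sub_apply] using this)
    calc ‖A (γ τ) - A (γ' τ)‖ ≤ m * (Ka * d * τ ^ (α+lam-1)) := h
      _ = (m * Ka * d) * τ ^ (α+lam-1) := by ring
  -- integrability
  have hintA : ∀ δ : ℝ → EuclideanSpace ℝ (Fin m) × ℝ, InX x₀ C₁ α ε δ →
      ∀ t ∈ Ioc (0:ℝ) ε, IntervalIntegrable (fun τ => A (δ τ)) volume 0 t := by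
    intro δ hδ t ht
    have hI : Set.uIoc (0:ℝ) t = Ioc 0 t := uIoc_of_le ht.1.le
    have hIoc : Ioc (0:ℝ) t ⊆ Ioc (0:ℝ) ε := Ioc_subset_Ioc le_rfl ht.2
    have hmemδ := hmem δ hδ
    have hcont : ContinuousOn (fun τ => A (δ τ)) (Ioc (0:ℝ) t) := by
      refine hAc.comp (hδ.1.mono ?_) ?_
      · exact fun τ hτ => ⟨hτ.1.le, hτ.2.trans ht.2⟩
      · exact fun τ hτ => hmemδ τ (hIoc hτ)
    have hg : IntervalIntegrable (fun τ : ℝ => (m * (C₀*4)) * τ ^ (lam-1)) volume 0 t :=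
      (intervalIntegral.intervalIntegrable_rpow' (by linarith)).const_mul _
    refine hg.mono_fun ?_ ?_
    · rw [hI]
      exact hcont.aestronglyMeasurable measurableSet_Ioc
    · rw [hI]
      refine (ae_restrict_iff' measurableSet_Ioc).2 (Filter.Eventually.of_forall ?_)
      intro τ hτ
      have hτε : τ ∈ Ioc (0:ℝ) ε := hIoc hτ
      have hy := hyrange δ hδ τ hτε
      have hqU := hmemδ τ hτε
      have hcomp : ∀ i, |A (δ τ) i| ≤ C₀ * (4 * τ ^ (lam-1)) := fun i =>
        (hA (δ τ) hqU i).trans (mul_le_mul_of_nonneg_left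
          (rpow_bound_neg hτε.1 (by linarith) (by linarith) hy.1) hC₀.le)
      have h2 := euclid_norm_le_card_mul (A (δ τ)) hcomp
      have hτp : 0 < τ ^ (lam-1) := Real.rpow_pos_of_pos hτε.1 _
      calc ‖A (δ τ)‖ ≤ m * (C₀ * (4 * τ ^ (lam-1))) := h2
        _ = (m * (C₀*4)) * τ ^ (lam-1) := by ring
        _ ≤ ‖(m * (C₀*4)) * τ ^ (lam-1)‖ := le_abs_self _
  have hintB : ∀ δ : ℝ → EuclideanSpace ℝ (Fin m) × ℝ, InX x₀ C₁ α ε δ →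
      ∀ t ∈ Ioc (0:ℝ) ε, IntervalIntegrable (fun τ => B (δ τ)) volume 0 t := by
    intro δ hδ t ht
    have hI : Set.uIoc (0:ℝ) t = Ioc 0 t := uIoc_of_le ht.1.le
    have hIoc : Ioc (0:ℝ) t ⊆ Ioc (0:ℝ) ε := Ioc_subset_Ioc le_rfl ht.2
    have hmemδ := hmem δ hδ
    have hcont : ContinuousOn (fun τ => B (δ τ)) (Ioc (0:ℝ) t) := by
      refine hBc.comp (hδ.1.mono ?_) ?_
      · exact fun τ hτ => ⟨hτ.1.le, hτ.2.trans ht.2⟩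
      · exact fun τ hτ => hmemδ τ (hIoc hτ)
    have hg : IntervalIntegrable (fun τ : ℝ => (C₀*2) * τ ^ lam) volume 0 t :=
      (intervalIntegral.intervalIntegrable_rpow' (by linarith)).const_mul _
    refine hg.mono_fun ?_ ?_
    · rw [hI]
      exact hcont.aestronglyMeasurable measurableSet_Ioc
    · rw [hI]
      refine (ae_restrict_iff' measurableSet_Ioc).2 (Filter.Eventually.of_forall ?_)
      intro τ hτ
      have hτε : τ ∈ Ioc (0:ℝ) ε := hIoc hτ
      have hy := hyrange δ hδ τ hτε
      have hqU := hmemδ τ hτε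
      have hyy : 0 < (δ τ).2 := lt_of_lt_of_le (by linarith [hτε.1]) hy.1
      have h2 : |B (δ τ)| ≤ C₀ * (2 * τ ^ lam) :=
        (hB (δ τ) hqU).trans (mul_le_mul_of_nonneg_left
          (rpow_bound_pos hτε.1 hlam0.le hlam1.le hyy.le hy.2) hC₀.le)
      have hτp : 0 < τ ^ lam := Real.rpow_pos_of_pos hτε.1 _
      calc ‖B (δ τ)‖ = |B (δ τ)| := Real.norm_eq_abs _
        _ ≤ C₀ * (2 * τ ^ lam) := h2
        _ = (C₀*2) * τ ^ lam := by ring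
        _ ≤ ‖(C₀*2) * τ ^ lam‖ := le_abs_self _
  -- final estimate
  rw [hdX]
  simp only [dX]
  refine ciSup_le ?_
  rintro ⟨t, ht0, htε⟩
  have hC'0 : (0:ℝ) ≤ (m*Ka)/lam + Ka + 1 := by positivity
  rcases eq_or_lt_of_le ht0 with h0 | htpos
  · have e0 : ((⟨t, ht0, htε⟩ : Icc (0:ℝ) ε) : ℝ) = 0 := h0.symm
    rw [e0, Real.zero_rpow (by linarith : -α ≠ 0),
      Real.zero_rpow (by linarith : -(α+1) ≠ 0), zero_mul, zero_mul, add_zero]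
    exact mul_nonneg (mul_nonneg hC'0 hεlam) hd0
  · have ht : t ∈ Ioc (0:ℝ) ε := ⟨htpos, htε⟩
    have hT1 : (Tmap A B x₀ γ t).1 - (Tmap A B x₀ γ' t).1
        = (∫ τ in (0:ℝ)..t, A (γ τ)) - ∫ τ in (0:ℝ)..t, A (γ' τ) := by
      simp [Tmap]
    have hT2 : (Tmap A B x₀ γ t).2 - (Tmap A B x₀ γ' t).2
        = (∫ τ in (0:ℝ)..t, B (γ τ)) - ∫ τ in (0:ℝ)..t, B (γ' τ) := by
      simp [Tmap]
    have hI : Set.uIoc (0:ℝ) t = Ioc 0 t := uIoc_of_le ht0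
    -- bound on the first component
    have hEA : ‖(∫ τ in (0:ℝ)..t, A (γ τ)) - ∫ τ in (0:ℝ)..t, A (γ' τ)‖
        ≤ (m*Ka*d) * (t ^ (α+lam) / (α+lam)) := by
      rw [← intervalIntegral.integral_sub (hintA γ hγ t ht) (hintA γ' hγ' t ht)]
      have hginteg : IntervalIntegrable (fun τ : ℝ => (m*Ka*d) * τ ^ (α+lam-1)) volume 0 t :=
        (intervalIntegral.intervalIntegrable_rpow' (by linarith)).const_mul _
      have hae : ∀ᵐ τ ∂volume.restrict (Set.uIoc (0:ℝ) t),
          ‖A (γ τ) - A (γ' τ)‖ ≤ (m*Ka*d) * τ ^ (α+lam-1) := by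
        rw [hI]
        refine (ae_restrict_iff' measurableSet_Ioc).2 (Filter.Eventually.of_forall ?_)
        intro τ hτ
        exact keyAn τ (Ioc_subset_Ioc le_rfl ht.2 hτ)
      refine (intervalIntegral.norm_integral_le_of_norm_le ht0
        (by rw [hI] at hae; exact (ae_restrict_iff' measurableSet_Ioc).1 hae) hginteg).trans ?_
      rw [intervalIntegral.integral_const_mul,
        integral_rpow (Or.inl (by linarith))]
      rw [Real.zero_rpow (by linarith : α+lam-1+1 ≠ 0)]
      have harith : α+lam-1+1 = α+lam := by ring
      rw [harith, sub_zero]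
    have hEB : |(∫ τ in (0:ℝ)..t, B (γ τ)) - ∫ τ in (0:ℝ)..t, B (γ' τ)|
        ≤ (Ka*d) * (t ^ (α+lam+1) / (α+lam+1)) := by
      rw [← intervalIntegral.integral_sub (hintB γ hγ t ht) (hintB γ' hγ' t ht)]
      have hginteg : IntervalIntegrable (fun τ : ℝ => (Ka*d) * τ ^ (α+lam)) volume 0 t :=
        (intervalIntegral.intervalIntegrable_rpow' (by linarith)).const_mul _
      have hae : ∀ᵐ τ ∂volume.restrict (Set.uIoc (0:ℝ) t),
          ‖B (γ τ) - B (γ' τ)‖ ≤ (Ka*d) * τ ^ (α+lam) := by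
        rw [hI]
        refine (ae_restrict_iff' measurableSet_Ioc).2 (Filter.Eventually.of_forall ?_)
        intro τ hτ
        have := keyB τ (Ioc_subset_Ioc le_rfl ht.2 hτ)
        calc ‖B (γ τ) - B (γ' τ)‖ = |B (γ τ) - B (γ' τ)| := Real.norm_eq_abs _
          _ ≤ Ka * d * τ ^ (α+lam) := this
      have h5 := intervalIntegral.norm_integral_le_of_norm_le ht0
        (by rw [hI] at hae; exact (ae_restrict_iff' measurableSet_Ioc).1 hae) hginteg
      rw [Real.norm_eq_abs] at h5
      refine h5.trans ?_
      rw [intervalIntegral.integral_const_mul,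
        integral_rpow (Or.inl (by linarith))]
      rw [Real.zero_rpow (by linarith : α+lam+1 ≠ 0)]
      have harith : α+lam+1 = α+lam+1 := rfl
      rw [sub_zero]
    -- put everything together
    have hcoe : ((⟨t, ht0, htε⟩ : Icc (0:ℝ) ε) : ℝ) = t := rfl
    rw [hcoe, hT1, hT2]
    have htlam : t ^ lam ≤ ε ^ lam := Real.rpow_le_rpow ht0 htε hlam0.le
    have htlam0 : 0 ≤ t ^ lam := Real.rpow_nonneg ht0 lam
    have hterm1 : t ^ (-α) * ‖(∫ τ in (0:ℝ)..t, A (γ τ)) - ∫ τ in (0:ℝ)..t, A (γ' τ)‖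
        ≤ (m*Ka)/lam * (ε ^ lam * d) := by
      have hstep := mul_le_mul_of_nonneg_left hEA
        (Real.rpow_nonneg ht0 (-α))
      refine hstep.trans ?_
      have e3 : t ^ (-α) * t ^ (α+lam) = t ^ lam := by
        rw [← Real.rpow_add htpos]; ring_nf
      have e4 : t ^ (-α) * ((m*Ka*d) * (t ^ (α+lam) / (α+lam)))
          = (m*Ka*d) / (α+lam) * (t ^ (-α) * t ^ (α+lam)) := by ring
      rw [e4, e3]
      have h6 : (m*Ka*d) / (α+lam) ≤ (m*Ka*d) / lam := by
        apply div_le_div_of_nonneg_left ?_ hlam0 (by linarith)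
        positivity
      calc (m*Ka*d) / (α+lam) * t ^ lam ≤ (m*Ka*d) / lam * t ^ lam :=
            mul_le_mul_of_nonneg_right h6 htlam0
        _ ≤ (m*Ka*d) / lam * ε ^ lam := by
            refine mul_le_mul_of_nonneg_left htlam ?_
            positivity
        _ = (m*Ka)/lam * (ε ^ lam * d) := by ring
    have hterm2 : t ^ (-(α+1)) * |(∫ τ in (0:ℝ)..t, B (γ τ)) - ∫ τ in (0:ℝ)..t, B (γ' τ)|
        ≤ Ka * (ε ^ lam * d) := by
      have hstep := mul_le_mul_of_nonneg_left hEB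
        (Real.rpow_nonneg ht0 (-(α+1)))
      refine hstep.trans ?_
      have e3 : t ^ (-(α+1)) * t ^ (α+lam+1) = t ^ lam := by
        rw [← Real.rpow_add htpos]; ring_nf
      have e4 : t ^ (-(α+1)) * ((Ka*d) * (t ^ (α+lam+1) / (α+lam+1)))
          = (Ka*d) / (α+lam+1) * (t ^ (-(α+1)) * t ^ (α+lam+1)) := by ring
      rw [e4, e3]
      have h6 : (Ka*d) / (α+lam+1) ≤ Ka*d := by
        apply div_le_self ?_ (by linarith)
        positivity
      calc (Ka*d) / (α+lam+1) * t ^ lam ≤ (Ka*d) * t ^ lam :=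
            mul_le_mul_of_nonneg_right h6 htlam0
        _ ≤ (Ka*d) * ε ^ lam := by
            refine mul_le_mul_of_nonneg_left htlam ?_
            positivity
        _ = Ka * (ε ^ lam * d) := by ring
    have hfinal : (m*Ka)/lam * (ε ^ lam * d) + Ka * (ε ^ lam * d)
        ≤ ((m*Ka)/lam + Ka + 1) * ε ^ lam * d := by
      have h7 : 0 ≤ ε ^ lam * d := mul_nonneg hεlam hd0
      nlinarith
    linarith
end
end

section
/- Under these hypotheses, let x₀ ∈ U₀ and ε′ ∈ (0,ε₀), and let γ : [0,ε′] → ℝ^{m+1} be any continuous map with γ(0) = (x₀,0), γ(t) ∈ U for all t ∈ (0,ε′], γ differentiable on (0,ε′], and γ′(t) = V(γ(t)) for all t ∈ (0,ε′]. Write γ(t) = (x₀ + a(t), t + b(t)). Then there exist constants C > 0 and ε ∈ (0,ε′], depending only on m, C₀, λ and ε₀ (not on γ or x₀), such that |b(t)| ≤ C t^{λ+1} and |a(t)| ≤ C t^{λ} for all t ∈ [0,ε]. -/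
open Set

noncomputable section

lemma ode_fst_deriv {E F : Type*} [NormedAddCommGroup E] [NormedSpace ℝ E]
    [NormedAddCommGroup F] [NormedSpace ℝ F] {γ : ℝ → E × F} {v : E × F}
    {s : Set ℝ} {u : ℝ} (h : HasDerivWithinAt γ v s u) :
    HasDerivWithinAt (fun t => (γ t).1) v.1 s u := by
  simpa [Function.comp_def] using
    (hasFDerivAt_fst (𝕜 := ℝ) (p := γ u)).comp_hasDerivWithinAt u h

lemma ode_snd_deriv {E F : Type*} [NormedAddCommGroup E] [NormedSpace ℝ E]
    [NormedAddCommGroup F] [NormedSpace ℝ F] {γ : ℝ → E × F} {v : E × F}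
    {s : Set ℝ} {u : ℝ} (h : HasDerivWithinAt γ v s u) :
    HasDerivWithinAt (fun t => (γ t).2) v.2 s u := by
  simpa [Function.comp_def] using
    (hasFDerivAt_snd (𝕜 := ℝ) (p := γ u)).comp_hasDerivWithinAt u h

lemma ode_euclid_norm_le {m : ℕ} (v : EuclideanSpace ℝ (Fin m)) {c : ℝ} (hc : 0 ≤ c)
    (h : ∀ i, |v i| ≤ c) : ‖v‖ ≤ Real.sqrt m * c := by
  rw [EuclideanSpace.norm_eq]
  have hsum : (∑ i, ‖v i‖ ^ 2) ≤ (m : ℝ) * c ^ 2 := by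
    calc (∑ i, ‖v i‖ ^ 2) ≤ ∑ _i : Fin m, c ^ 2 := by
          refine Finset.sum_le_sum fun i _ => ?_
          rw [Real.norm_eq_abs]
          exact pow_le_pow_left₀ (abs_nonneg _) (h i) 2
      _ = (m : ℝ) * c ^ 2 := by simp [mul_comm]
  calc Real.sqrt (∑ i, ‖v i‖ ^ 2) ≤ Real.sqrt ((m : ℝ) * c ^ 2) := Real.sqrt_le_sqrt hsum
    _ = Real.sqrt m * c := by
        rw [Real.sqrt_mul (Nat.cast_nonneg m), Real.sqrt_sq hc]

lemma ode_helper {E : Type*} [NormedAddCommGroup E] [NormedSpace ℝ E]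
    {f : ℝ → E} {f' : ℝ → E} {ε' t c p : ℝ} (hp : 0 < p) (hc : 0 ≤ c)
    (ht : 0 < t) (ht' : t ≤ ε')
    (hf : ContinuousOn f (Icc 0 ε')) (hf0 : f 0 = 0)
    (hd : ∀ u ∈ Ioc (0:ℝ) t, HasDerivWithinAt f (f' u) (Icc 0 ε') u)
    (hbound : ∀ u ∈ Ioc (0:ℝ) t, ‖f' u‖ ≤ c * u ^ (p - 1)) :
    ‖f t‖ ≤ (c / p) * t ^ p := by
  have hcp : 0 ≤ c / p := div_nonneg hc hp.le
  have key : ∀ s ∈ Ioc (0:ℝ) t, ‖f t - f s‖ ≤ c / p * (t ^ p - s ^ p) := by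
    intro s hs
    have hst : s ≤ t := hs.2
    have hs0 : (0:ℝ) < s := hs.1
    set Bf : ℝ → ℝ := fun u => c / p * (u ^ p - s ^ p) with hBf
    have main := image_norm_le_of_norm_deriv_right_le_deriv_boundary'
      (f := fun u => f u - f s) (a := s) (b := t)
      (f' := f') (B := Bf) (B' := fun u => c * u ^ (p - 1))
      ?_ ?_ ?_ ?_ ?_ ?_
    · have := main (right_mem_Icc.2 hst)
      simpa [hBf] using this
    · exact ((hf.mono (Icc_subset_Icc hs0.le ht')).sub continuousOn_const)
    · intro x hx
      have hx0 : x ∈ Ioc (0:ℝ) t := ⟨lt_of_lt_of_le hs0 hx.1, hx.2.le⟩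
      have h1 : HasDerivWithinAt (fun u => f u - f s) (f' x) (Icc 0 ε') x :=
        (hd x hx0).sub_const _
      refine h1.mono_of_mem_nhdsWithin ?_
      have hio : Iio ε' ∈ nhdsWithin x (Ici x) :=
        nhdsWithin_le_nhds (Iio_mem_nhds (lt_of_lt_of_le hx.2 ht'))
      filter_upwards [hio, self_mem_nhdsWithin] with y hy1 hy2
      exact ⟨le_trans hx0.1.le hy2, hy1.le⟩
    · simp [hBf]
    · apply ContinuousOn.mul continuousOn_const
      apply ContinuousOn.sub _ continuousOn_const
      intro x hx
      exact (Real.continuousAt_rpow_const x p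
        (Or.inl (lt_of_lt_of_le hs0 hx.1).ne')).continuousWithinAt
    · intro x hx
      have hx0 : (0:ℝ) < x := lt_of_lt_of_le hs0 hx.1
      have h := (Real.hasDerivAt_rpow_const (p := p) (Or.inl hx0.ne'))
      have h2 : HasDerivAt Bf (c / p * (p * x ^ (p - 1))) x := by
        exact ((h.sub_const _).const_mul _)
      have heq : c / p * (p * x ^ (p - 1)) = c * x ^ (p - 1) := by
        field_simp
      rw [heq] at h2
      exact h2.hasDerivWithinAt
    · intro x hx
      exact hbound x ⟨lt_of_lt_of_le hs0 hx.1, hx.2.le⟩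
  have hlim : Filter.Tendsto (fun s => c / p * (t ^ p - s ^ p) + ‖f s‖)
      (nhdsWithin 0 (Ioc 0 t)) (nhds (c / p * (t ^ p - 0 ^ p) + ‖f 0‖)) := by
    apply Filter.Tendsto.add
    · apply Filter.Tendsto.const_mul
      apply Filter.Tendsto.const_sub
      have : Filter.Tendsto (fun s : ℝ => s ^ p) (nhds 0) (nhds ((0:ℝ) ^ p)) :=
        (Real.continuousAt_rpow_const 0 p (Or.inr hp.le)).tendsto
      exact this.mono_left nhdsWithin_le_nhds
    · have hc0 : ContinuousWithinAt f (Icc 0 ε') 0 :=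
        hf 0 (left_mem_Icc.2 (ht.le.trans ht'))
      have : Filter.Tendsto f (nhdsWithin 0 (Ioc 0 t)) (nhds (f 0)) :=
        hc0.tendsto.mono_left (nhdsWithin_mono _ (fun x hx => ⟨hx.1.le, hx.2.trans ht'⟩))
      exact (continuous_norm.tendsto _).comp this
  have hne : (nhdsWithin (0:ℝ) (Ioc 0 t)).NeBot := left_nhdsWithin_Ioc_neBot ht
  have hev : ∀ᶠ s in nhdsWithin (0:ℝ) (Ioc 0 t),
      ‖f t‖ ≤ c / p * (t ^ p - s ^ p) + ‖f s‖ := by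
    filter_upwards [self_mem_nhdsWithin] with s hs
    calc ‖f t‖ ≤ ‖f t - f s‖ + ‖f s‖ := by
          simpa using norm_add_le (f t - f s) (f s)
      _ ≤ c / p * (t ^ p - s ^ p) + ‖f s‖ := by gcongr; exact key s hs
  have := ge_of_tendsto hlim hev
  simpa [hf0, Real.zero_rpow hp.ne'] using this



/-- **A priori bounds for solutions of the singular ODE.**  Let `U₀ ⊂ ℝ^m` be open,
`ε₀ > 0`, `U = U₀ × (0,ε₀)`, and let `V(x,y) = (A(x,y), 1 + B(x,y))` be a `C¹` vector
field on `U` with `|B| ≤ C₀ y^λ` and `|A^i| ≤ C₀ y^{λ−1}` on `U` for some `C₀ > 0`,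
`λ ∈ (0,1)`.  Then there are `C > 0` and `ε > 0`, independent of `γ` and `x₀`, such that
any continuous solution `γ(t) = (x₀ + a(t), t + b(t))` on `[0,ε′]` of `γ' = V(γ)` with
`γ(0) = (x₀,0)` satisfies `|b(t)| ≤ C t^{λ+1}` and `|a(t)| ≤ C t^λ` for
`t ∈ [0, min ε ε′]`. -/
theorem singular_ode_apriori_bounds {m : ℕ} (hm : 1 ≤ m)
    (U₀ : Set (EuclideanSpace ℝ (Fin m))) (hU₀ : IsOpen U₀)
    (ε₀ : ℝ) (hε₀ : 0 < ε₀)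
    (A : EuclideanSpace ℝ (Fin m) × ℝ → EuclideanSpace ℝ (Fin m))
    (B : EuclideanSpace ℝ (Fin m) × ℝ → ℝ)
    (hV : ContDiffOn ℝ 1 (fun q => (A q, 1 + B q)) (U₀ ×ˢ Ioo 0 ε₀))
    (C₀ : ℝ) (hC₀ : 0 < C₀) (lam : ℝ) (hlam : lam ∈ Ioo (0 : ℝ) 1)
    (hB : ∀ q ∈ U₀ ×ˢ Ioo (0:ℝ) ε₀, |B q| ≤ C₀ * q.2 ^ lam)
    (hA : ∀ q ∈ U₀ ×ˢ Ioo (0:ℝ) ε₀, ∀ i : Fin m,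
      |A q i| ≤ C₀ * q.2 ^ (lam - 1)) :
    ∃ C : ℝ, 0 < C ∧ ∃ ε : ℝ, 0 < ε ∧
      ∀ x₀ ∈ U₀, ∀ ε' : ℝ, 0 < ε' → ε' < ε₀ →
        ∀ γ : ℝ → EuclideanSpace ℝ (Fin m) × ℝ,
          ContinuousOn γ (Icc 0 ε') → γ 0 = (x₀, 0) →
          (∀ t ∈ Ioc (0:ℝ) ε', γ t ∈ U₀ ×ˢ Ioo (0:ℝ) ε₀ ∧
            HasDerivWithinAt γ (A (γ t), 1 + B (γ t)) (Icc 0 ε') t) →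
          ∀ t ∈ Icc (0:ℝ) (min ε ε'),
            |(γ t).2 - t| ≤ C * t ^ (lam + 1) ∧ ‖(γ t).1 - x₀‖ ≤ C * t ^ lam := by
  obtain ⟨hlam0, hlam1⟩ := hlam
  set M₀ : ℝ := C₀ * ε₀ ^ lam with hM₀
  have hM₀pos : 0 < M₀ := mul_pos hC₀ (Real.rpow_pos_of_pos hε₀ _)
  set K : ℝ := 1 + M₀ with hK
  have hKpos : 0 < K := by positivity
  set C₁ : ℝ := C₀ * K ^ lam with hC₁
  have hC₁pos : 0 < C₁ := mul_pos hC₀ (Real.rpow_pos_of_pos hKpos _)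
  have hsm : (0:ℝ) < Real.sqrt m := by
    apply Real.sqrt_pos.2
    exact_mod_cast Nat.lt_of_lt_of_le Nat.zero_lt_one hm
  set C₂ : ℝ := Real.sqrt m * (C₀ * (2:ℝ) ^ (1 - lam)) with hC₂
  have hC₂pos : 0 < C₂ :=
    mul_pos hsm (mul_pos hC₀ (Real.rpow_pos_of_pos two_pos _))
  refine ⟨C₁ + C₂ / lam + 1, by positivity, min ε₀ (((2 * C₁)⁻¹) ^ (1 / lam)), ?_, ?_⟩
  · exact lt_min hε₀ (Real.rpow_pos_of_pos (by positivity) _)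
  set C : ℝ := C₁ + C₂ / lam + 1 with hC
  set ε : ℝ := min ε₀ (((2 * C₁)⁻¹) ^ (1 / lam)) with hε
  have hCpos : 0 < C := by positivity
  -- smallness: for 0 < u ≤ ε we have C₁ * u ^ lam ≤ 1/2
  have hsmall : ∀ u : ℝ, 0 ≤ u → u ≤ ε → C₁ * u ^ lam ≤ 1 / 2 := by
    intro u hu0 huε
    have h1 : u ^ lam ≤ (((2 * C₁)⁻¹) ^ (1 / lam)) ^ lam :=
      Real.rpow_le_rpow hu0 (huε.trans (min_le_right _ _)) hlam0.le
    have h2 : (((2 * C₁)⁻¹ : ℝ) ^ (1 / lam)) ^ lam = (2 * C₁)⁻¹ := by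
      rw [← Real.rpow_mul (by positivity), one_div_mul_cancel hlam0.ne', Real.rpow_one]
    rw [h2] at h1
    calc C₁ * u ^ lam ≤ C₁ * (2 * C₁)⁻¹ := by
          exact mul_le_mul_of_nonneg_left h1 hC₁pos.le
      _ = 1 / 2 := by field_simp
  intro x₀ hx₀ ε' hε' hε'ε₀ γ hγc hγ0 hγd t ht
  rcases ht.1.eq_or_lt with h0 | h0
  · -- t = 0
    subst h0
    constructor
    · simp [hγ0, Real.zero_rpow (by positivity : lam + 1 ≠ 0)]
    · simp [hγ0, Real.zero_rpow hlam0.ne']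
  have htε : t ≤ ε := ht.2.trans (min_le_left _ _)
  have htε' : t ≤ ε' := ht.2.trans (min_le_right _ _)
  -- basic facts about γ
  have hyIoo : ∀ u ∈ Ioc (0:ℝ) ε', (γ u).2 ∈ Ioo (0:ℝ) ε₀ := by
    intro u hu; exact ((hγd u hu).1).2
  have hxU₀ : ∀ u ∈ Ioc (0:ℝ) ε', (γ u).1 ∈ U₀ := by
    intro u hu; exact ((hγd u hu).1).1
  -- the vertical displacement b
  set fb : ℝ → ℝ := fun u => (γ u).2 - u with hfb
  have hfbc : ContinuousOn fb (Icc 0 ε') :=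
    (continuous_snd.comp_continuousOn hγc).sub continuousOn_id
  have hfb0 : fb 0 = 0 := by simp [hfb, hγ0]
  have hfbd : ∀ u ∈ Ioc (0:ℝ) ε',
      HasDerivWithinAt fb (B (γ u)) (Icc 0 ε') u := by
    intro u hu
    have h1 := ode_snd_deriv (hγd u hu).2
    have h2 := h1.sub (hasDerivWithinAt_id u (Icc 0 ε'))
    simpa [hfb, Pi.sub_def] using h2
  -- crude bound on fb
  have hbA : ∀ u ∈ Ioc (0:ℝ) ε', |fb u| ≤ M₀ * u := by
    intro u hu
    have h := ode_helper (p := 1) (c := M₀) (f := fb) (f' := fun v => B (γ v))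
      one_pos hM₀pos.le hu.1 hu.2 hfbc hfb0
      (fun v hv => hfbd v ⟨hv.1, hv.2.trans hu.2⟩) ?_
    · simpa [Real.rpow_one] using h
    · intro v hv
      have hv' : v ∈ Ioc (0:ℝ) ε' := ⟨hv.1, hv.2.trans hu.2⟩
      have hy := hyIoo v hv'
      rw [Real.norm_eq_abs]
      calc |B (γ v)| ≤ C₀ * (γ v).2 ^ lam := hB _ ⟨hxU₀ v hv', hy⟩
        _ ≤ C₀ * ε₀ ^ lam :=
            mul_le_mul_of_nonneg_left
              (Real.rpow_le_rpow hy.1.le hy.2.le hlam0.le) hC₀.le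
        _ = M₀ * v ^ ((1:ℝ) - 1) := by simp [hM₀]
  -- hence y ≤ K u
  have hyK : ∀ u ∈ Ioc (0:ℝ) ε', (γ u).2 ≤ K * u := by
    intro u hu
    have h := hbA u hu
    have := abs_le.1 h
    have : (γ u).2 - u ≤ M₀ * u := this.2
    rw [hK]; nlinarith
  -- refined bound on fb
  have hbC : ∀ u ∈ Ioc (0:ℝ) ε', |fb u| ≤ C₁ / (lam + 1) * u ^ (lam + 1) := by
    intro u hu
    have h := ode_helper (p := lam + 1) (c := C₁) (f := fb) (f' := fun v => B (γ v))
      (by positivity) hC₁pos.le hu.1 hu.2 hfbc hfb0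
      (fun v hv => hfbd v ⟨hv.1, hv.2.trans hu.2⟩) ?_
    · simpa using h
    · intro v hv
      have hv' : v ∈ Ioc (0:ℝ) ε' := ⟨hv.1, hv.2.trans hu.2⟩
      have hy := hyIoo v hv'
      rw [Real.norm_eq_abs]
      calc |B (γ v)| ≤ C₀ * (γ v).2 ^ lam := hB _ ⟨hxU₀ v hv', hy⟩
        _ ≤ C₀ * (K * v) ^ lam :=
            mul_le_mul_of_nonneg_left
              (Real.rpow_le_rpow hy.1.le (hyK v hv') hlam0.le) hC₀.le
        _ = C₁ * v ^ (lam + 1 - 1) := by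
            rw [Real.mul_rpow hKpos.le hv.1.le, hC₁]
            ring_nf
  -- lower bound on y
  have hylow : ∀ u : ℝ, 0 < u → u ≤ ε → u ≤ ε' → u / 2 ≤ (γ u).2 := by
    intro u hu0 huε huε'
    have h := (abs_le.1 (hbC u ⟨hu0, huε'⟩)).1
    have hrw : u ^ (lam + 1) = u ^ lam * u := by
      rw [Real.rpow_add hu0, Real.rpow_one]
    have h2 : C₁ / (lam + 1) * u ^ (lam + 1) ≤ 1 / 2 * u := by
      rw [hrw]
      have hd : C₁ / (lam + 1) ≤ C₁ := div_le_self hC₁pos.le (by linarith)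
      calc C₁ / (lam + 1) * (u ^ lam * u) ≤ C₁ * (u ^ lam * u) := by
            apply mul_le_mul_of_nonneg_right hd
            positivity
        _ = (C₁ * u ^ lam) * u := by ring
        _ ≤ 1 / 2 * u :=
            mul_le_mul_of_nonneg_right (hsmall u hu0.le huε) hu0.le
    have : -(1 / 2 * u) ≤ (γ u).2 - u := le_trans (by linarith) h
    linarith
  constructor
  · -- bound on b
    have h := hbC t ⟨h0, htε'⟩
    calc |(γ t).2 - t| ≤ C₁ / (lam + 1) * t ^ (lam + 1) := h
      _ ≤ C * t ^ (lam + 1) := by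
          apply mul_le_mul_of_nonneg_right _ (by positivity)
          have : C₁ / (lam + 1) ≤ C₁ := div_le_self hC₁pos.le (by linarith)
          rw [hC]; have : 0 ≤ C₂ / lam := by positivity
          linarith [div_le_self hC₁pos.le (by linarith : (1:ℝ) ≤ lam + 1)]
  · -- bound on a
    set fa : ℝ → EuclideanSpace ℝ (Fin m) := fun u => (γ u).1 - x₀ with hfa
    have hfac : ContinuousOn fa (Icc 0 ε') :=
      (continuous_fst.comp_continuousOn hγc).sub continuousOn_const
    have hfa0 : fa 0 = 0 := by simp [hfa, hγ0]
    have h := ode_helper (p := lam) (c := C₂) (f := fa) (f' := fun v => A (γ v))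
      hlam0 hC₂pos.le h0 htε' hfac hfa0 ?_ ?_
    · calc ‖(γ t).1 - x₀‖ ≤ C₂ / lam * t ^ lam := h
        _ ≤ C * t ^ lam := by
            apply mul_le_mul_of_nonneg_right _ (by positivity)
            rw [hC]; linarith
    · intro v hv
      have hv' : v ∈ Ioc (0:ℝ) ε' := ⟨hv.1, hv.2.trans htε'⟩
      have h1 := ode_fst_deriv (hγd v hv').2
      exact h1.sub_const x₀
    · intro v hv
      have hv' : v ∈ Ioc (0:ℝ) ε' := ⟨hv.1, hv.2.trans htε'⟩
      have hy := hyIoo v hv'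
      have hvlow : v / 2 ≤ (γ v).2 := hylow v hv.1 (hv.2.trans htε) (hv.2.trans htε')
      have hstep : ∀ i : Fin m, |A (γ v) i| ≤ C₀ * (v / 2) ^ (lam - 1) := by
        intro i
        calc |A (γ v) i| ≤ C₀ * (γ v).2 ^ (lam - 1) := hA _ ⟨hxU₀ v hv', hy⟩ i
          _ ≤ C₀ * (v / 2) ^ (lam - 1) := by
              apply mul_le_mul_of_nonneg_left _ hC₀.le
              exact Real.rpow_le_rpow_of_nonpos (by linarith [hv.1]) hvlow
                (by linarith)
      have hnorm := ode_euclid_norm_le (A (γ v))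
        (mul_nonneg hC₀.le (Real.rpow_nonneg (by linarith [hv.1]) _)) hstep
      calc ‖A (γ v)‖ ≤ Real.sqrt m * (C₀ * (v / 2) ^ (lam - 1)) := hnorm
        _ = C₂ * v ^ (lam - 1) := by
            have hrw : (v / 2 : ℝ) ^ (lam - 1) = v ^ (lam - 1) * (2:ℝ) ^ (1 - lam) := by
              rw [Real.div_rpow hv.1.le (by norm_num : (0:ℝ) ≤ 2), div_eq_mul_inv,
                ← Real.rpow_neg (by norm_num : (0:ℝ) ≤ 2), neg_sub]
            rw [hC₂, hrw]; ring
end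
end
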